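/- arXiv:1806.03672 — 5 statements merged into one kernel-verified Lean document; each statement's English description precedes it below -/
import Mathlib

section
/- Let G be a finite group in which every non-normal primary subgroup satisfies the Frobenius normalizer condition. Then every maximal nilpotent subgroup U of G with F(G)U = G is a Carter subgroup of G. -/
open Subgroup

/-- The supremum of a family of normal subgroups is normal. -/
theorem Subgroup.normal_iSup_of_normal {G : Type*} [Group G] {ι : Sort*} (H : ι → Subgroup G)
    (h : ∀ i, (H i).Normal) : (⨆ i, H i).Normal := by
  constructor
  intro x hx g
  refine Subgroup.iSup_induction (C := fun y => g * y * g⁻¹ ∈ ⨆ i, H i) H hx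
    (fun i y hy => le_iSup H i ((h i).conj_mem y hy g)) (by simpa using Subgroup.one_mem _) ?_
  intro a b ha hb
  have heq : g * (a * b) * g⁻¹ = (g * a * g⁻¹) * (g * b * g⁻¹) := by group
  rw [heq]; exact mul_mem ha hb

/-- The centralizer `C_G(P)` is a normal subgroup of the normalizer `N_G(P)`. -/
instance Subgroup.centralizer_subgroupOf_normalizer_normal {G : Type*} [Group G]
    (P : Subgroup G) : ((Subgroup.centralizer (P : Set G)).subgroupOf (Subgroup.normalizer (P : Set G))).Normal :=
  P.normalizerMonoidHom_ker ▸ P.normalizerMonoidHom.normal_ker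

/-- A subgroup `P` (a `p`-subgroup) satisfies the Frobenius normalizer condition in `G`
if `N_G(P)/C_G(P)` is a `p`-group. -/
def FrobeniusNC {G : Type*} [Group G] (p : ℕ) (P : Subgroup G) : Prop :=
  IsPGroup p (Subgroup.normalizer (P : Set G) ⧸ (Subgroup.centralizer (P : Set G)).subgroupOf (Subgroup.normalizer (P : Set G)))

/-- A subgroup is subnormal if there is a chain from it to the whole group in which
each term is normal in the next. -/
def IsSubnormal {G : Type*} [Group G] (H : Subgroup G) : Prop :=
  ∃ (n : ℕ) (c : ℕ → Subgroup G), c 0 = H ∧ c n = ⊤ ∧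
    ∀ i < n, c i ≤ c (i + 1) ∧ ((c i).subgroupOf (c (i + 1))).Normal

/-- The hypercenter `Z_∞(G)`: the largest term of the upper central series. -/
def hypercenter (G : Type*) [Group G] : Subgroup G :=
  ⨆ n, Subgroup.upperCentralSeries G n

instance hypercenter_normal (G : Type*) [Group G] : (hypercenter G).Normal :=
  Subgroup.normal_iSup_of_normal _ fun _ => inferInstance

/-- The Fitting subgroup `F(G)`: the largest normal nilpotent subgroup (of a finite group). -/
def FittingSubgroup (G : Type*) [Group G] : Subgroup G :=
  ⨆ (H : Subgroup G) (_ : H.Normal ∧ Group.IsNilpotent H), H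

instance FittingSubgroup_normal (G : Type*) [Group G] : (FittingSubgroup G).Normal :=
  Subgroup.normal_iSup_of_normal _ fun H =>
    Subgroup.normal_iSup_of_normal _ fun hH => hH.1

/-- `F_0(G)`: the product of all normal Sylow subgroups of `G`. -/
def normalSylowProduct (G : Type*) [Group G] : Subgroup G :=
  ⨆ (p : ℕ) (_ : p.Prime) (P : Sylow p G) (_ : (P : Subgroup G).Normal), (P : Subgroup G)

instance normalSylowProduct_normal (G : Type*) [Group G] : (normalSylowProduct G).Normal := by
  apply Subgroup.normal_iSup_of_normal; intro p
  apply Subgroup.normal_iSup_of_normal; intro _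
  apply Subgroup.normal_iSup_of_normal; intro P
  apply Subgroup.normal_iSup_of_normal; intro hP
  exact hP

/-- A Carter subgroup: a nilpotent self-normalizing subgroup. -/
def IsCarterSubgroup {G : Type*} [Group G] (U : Subgroup G) : Prop :=
  Group.IsNilpotent U ∧ Subgroup.normalizer (U : Set G) = U

/-- A maximal nilpotent subgroup: maximal under inclusion among nilpotent subgroups. -/
def IsMaximalNilpotent {G : Type*} [Group G] (U : Subgroup G) : Prop :=
  Group.IsNilpotent U ∧ ∀ V : Subgroup G, Group.IsNilpotent V → U ≤ V → V = U

section AuxLemmas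

variable {G : Type*} [Group G]

/-- If `T` contains every element of `A` of prime power order, then `A ≤ T`. -/
lemma le_of_primary_elements [Finite G] (A T : Subgroup G)
    (hT : ∀ g, g ∈ A → ∀ r : ℕ, r.Prime → (∃ k : ℕ, g ^ r ^ k = 1) → g ∈ T) : A ≤ T := by
  have main : ∀ n : ℕ, ∀ u : G, u ∈ A → orderOf u = n → u ∈ T := by
    intro n
    induction n using Nat.strong_induction_on with
    | _ n ih =>
      intro u hu hord
      rcases eq_or_ne n 1 with h1 | h1
      · have : u = 1 := orderOf_eq_one_iff.mp (by rw [hord, h1])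
        rw [this]; exact T.one_mem
      · have hn0 : n ≠ 0 := by rw [← hord]; exact (orderOf_pos u).ne'
        set p := n.minFac with hp_def
        have hp : p.Prime := Nat.minFac_prime h1
        set m : ℕ := p ^ n.factorization p with hm_def
        set m' : ℕ := n / m with hm'_def
        have hmm' : m * m' = n := Nat.ordProj_mul_ordCompl_eq_self n p
        have hco : Nat.Coprime m m' := Nat.Coprime.pow_left _ (Nat.coprime_ordCompl hp hn0)
        have hun : u ^ n = 1 := by rw [← hord]; exact pow_orderOf_eq_one u
        have hy : u ^ m' ∈ T := by
          refine hT _ (pow_mem hu m') p hp ⟨n.factorization p, ?_⟩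
          rw [← pow_mul, mul_comm m' _, ← hm_def, hmm', hun]
        have hm1 : 1 < m := by
          have hk : 0 < n.factorization p :=
            hp.factorization_pos_of_dvd hn0 (Nat.minFac_dvd n)
          calc 1 < p := hp.one_lt
          _ ≤ p ^ n.factorization p := Nat.le_self_pow hk.ne' p
        have hm'lt : m' < n := Nat.div_lt_self (Nat.pos_of_ne_zero hn0) hm1
        have hzord : orderOf (u ^ m) ∣ m' :=
          orderOf_dvd_of_pow_eq_one (by rw [← pow_mul, hmm', hun])
        have hm'pos : 0 < m' := Nat.ordCompl_pos p hn0
        have hz : u ^ m ∈ T :=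
          ih (orderOf (u ^ m))
            (lt_of_le_of_lt (Nat.le_of_dvd hm'pos hzord) hm'lt) _ (pow_mem hu m) rfl
        obtain ⟨a, b, hab⟩ : IsCoprime (m : ℤ) (m' : ℤ) := hco.isCoprime
        have hdec : u = (u ^ m) ^ a * (u ^ m') ^ b := by
          rw [← zpow_natCast u m, ← zpow_natCast u m', ← zpow_mul, ← zpow_mul, ← zpow_add,
            show (m : ℤ) * a + (m' : ℤ) * b = 1 by linarith, zpow_one]
        rw [hdec]
        exact mul_mem (zpow_mem hz a) (zpow_mem hy b)
  intro u hu; exact main (orderOf u) u hu rfl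

/-- The join of two mutually centralizing nilpotent subgroups is nilpotent. -/
lemma isNilpotent_sup_of_centralizer (A B : Subgroup G)
    (hA : Group.IsNilpotent A) (hB : Group.IsNilpotent B)
    (hAB : A ≤ Subgroup.centralizer (B : Set G)) : Group.IsNilpotent ↥(A ⊔ B) := by
  haveI := hA; haveI := hB
  let φ : ↥A × ↥B →* G := MonoidHom.noncommCoprod A.subtype B.subtype
    (fun a b => Subgroup.mem_centralizer_iff.mp (hAB a.2) b b.2 |>.symm)
  have hrange : φ.range = A ⊔ B := by
    apply le_antisymm
    · rintro _ ⟨⟨a, b⟩, rfl⟩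
      have : φ (a, b) = (a : G) * (b : G) := rfl
      rw [this]
      exact mul_mem (Subgroup.mem_sup_left a.2) (Subgroup.mem_sup_right b.2)
    · rw [sup_le_iff]
      constructor
      · intro a ha
        refine ⟨(⟨a, ha⟩, 1), ?_⟩
        show (a : G) * ((1 : ↥B) : G) = a
        simp
      · intro b hb
        refine ⟨(1, ⟨b, hb⟩), ?_⟩
        show ((1 : ↥A) : G) * (b : G) = b
        simp
  have h1 : Group.IsNilpotent ↥φ.range :=
    nilpotent_of_surjective φ.rangeRestrict φ.rangeRestrict_surjective
  rw [hrange] at h1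
  exact h1

/-- Primary part of a finite nilpotent subgroup: a p-subgroup consisting exactly of
the p-elements. -/
lemma exists_primary_part [Finite G] (U : Subgroup G) (hU : Group.IsNilpotent ↥U)
    {p : ℕ} (hp : p.Prime) :
    ∃ P : Subgroup G, IsPGroup p P ∧ ∀ g : G, g ∈ P ↔ g ∈ U ∧ ∃ k : ℕ, g ^ p ^ k = 1 := by
  haveI := Fact.mk hp
  haveI : Finite (Sylow p ↥U) := by
    exact Finite.of_injective (fun P => ((P : Subgroup ↥U) : Set ↥U))
      (fun P Q h => Sylow.ext (SetLike.coe_injective h))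
  obtain ⟨Pp⟩ : Nonempty (Sylow p ↥U) := inferInstance
  haveI := hU
  have tf : Group.IsNilpotent ↥U ↔
      ∀ (r : ℕ) (_hr : Fact r.Prime) (P : Sylow r ↥U), (↑P : Subgroup ↥U).Normal :=
    (isNilpotent_of_finite_tfae (G := ↥U)).out 0 3
  have hnormal : (Pp : Subgroup ↥U).Normal := tf.mp hU p (Fact.mk hp) Pp
  haveI := Sylow.unique_of_normal Pp hnormal
  refine ⟨(Pp : Subgroup ↥U).map U.subtype, Pp.2.map U.subtype, fun g => ⟨?_, ?_⟩⟩
  · rintro ⟨u, hu, rfl⟩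
    refine ⟨u.2, ?_⟩
    obtain ⟨k, hk⟩ := Pp.2 ⟨u, hu⟩
    refine ⟨k, ?_⟩
    have := congrArg (fun z : ↥(Pp : Subgroup ↥U) => ((z : ↥U) : G)) hk
    simpa using this
  · rintro ⟨hgU, k, hk⟩
    set u : ↥U := ⟨g, hgU⟩ with hu_def
    have hu1 : u ^ p ^ k = 1 := Subtype.ext (by simpa using hk)
    have hzp : IsPGroup p (Subgroup.zpowers u) := by
      intro v
      obtain ⟨i, hi⟩ := v.2
      refine ⟨k, Subtype.ext ?_⟩
      have : (v : ↥U) ^ p ^ k = 1 := by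
        rw [← hi, ← zpow_natCast (u ^ i), ← zpow_mul, mul_comm, zpow_mul, zpow_natCast,
          hu1, one_zpow]
      simpa using this
    obtain ⟨Q, hQ⟩ := hzp.exists_le_sylow
    have hQP : (Q : Subgroup ↥U) = Pp := congrArg _ (Subsingleton.elim Q Pp)
    exact ⟨u, hQP ▸ hQ (Subgroup.mem_zpowers u), rfl⟩

end AuxLemmas

theorem maximal_nilpotent_is_carter_of_frobenius_nonnormal
    (G : Type*) [Group G] [Finite G]
    (h : ∀ (p : ℕ) (P : Subgroup G), p.Prime → IsPGroup p P → ¬P.Normal → FrobeniusNC p P) :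
    ∀ U : Subgroup G, IsMaximalNilpotent U → FittingSubgroup G ⊔ U = ⊤ →
      IsCarterSubgroup U := by
  intro U hUfull hFU
  obtain ⟨hUnil, hUmax⟩ := hUfull
  refine ⟨hUnil, le_antisymm ?_ Subgroup.le_normalizer⟩
  by_contra hns
  rw [SetLike.not_le_iff_exists] at hns
  obtain ⟨w, hwN, hwU⟩ := hns
  -- Step 1: find x₀ ∈ N(U) \ U with x₀ ^ q ∈ U for a prime q.
  set N := Subgroup.normalizer (U : Set G) with hN
  set U' : Subgroup ↥N := U.subgroupOf N with hU'
  haveI : U'.Normal := Subgroup.normal_in_normalizer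
  set w' : ↥N := ⟨w, hwN⟩ with hw'
  have hw'1 : (QuotientGroup.mk' U') w' ≠ 1 := by
    rw [Ne, QuotientGroup.mk'_apply, QuotientGroup.eq_one_iff]
    intro hh
    exact hwU ((Subgroup.mem_subgroupOf).mp hh)
  set n₁ := orderOf ((QuotientGroup.mk' U') w') with hn₁
  have hn₁0 : n₁ ≠ 0 := (orderOf_pos _).ne'
  have hn₁1 : n₁ ≠ 1 := fun hc => hw'1 (orderOf_eq_one_iff.mp hc)
  set q := n₁.minFac with hq_def
  have hq : q.Prime := Nat.minFac_prime hn₁1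
  set x₀ : G := w ^ (n₁ / q) with hx₀
  have hx₀N : x₀ ∈ N := pow_mem hwN _
  have hcoe_pow : ∀ k : ℕ, ((w' ^ k : ↥N) : G) = w ^ k := fun k => rfl
  have hx₀U : x₀ ∉ U := by
    intro hc
    have h1 : (QuotientGroup.mk' U') (w' ^ (n₁ / q)) = 1 := by
      rw [QuotientGroup.mk'_apply, QuotientGroup.eq_one_iff]
      rw [hU', Subgroup.mem_subgroupOf]
      simpa [hcoe_pow] using hc
    rw [map_pow] at h1
    have hdvd := orderOf_dvd_of_pow_eq_one h1
    have hlt : n₁ / q < n₁ := Nat.div_lt_self (Nat.pos_of_ne_zero hn₁0) hq.one_lt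
    have hpos : 0 < n₁ / q :=
      Nat.div_pos (Nat.minFac_le (Nat.pos_of_ne_zero hn₁0)) hq.pos
    exact absurd (Nat.le_of_dvd hpos hdvd) (not_le.mpr hlt)
  have hx₀q : x₀ ^ q ∈ U := by
    have h1 : (QuotientGroup.mk' U') (w' ^ ((n₁ / q) * q)) = 1 := by
      rw [map_pow, Nat.div_mul_cancel n₁.minFac_dvd]
      exact pow_orderOf_eq_one _
    rw [QuotientGroup.mk'_apply, QuotientGroup.eq_one_iff, hU',
      Subgroup.mem_subgroupOf] at h1
    have : ((w' ^ ((n₁ / q) * q) : ↥N) : G) = x₀ ^ q := by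
      rw [hcoe_pow, pow_mul]
    rwa [this] at h1
  -- Step 2: replace x₀ by a genuine q-element x ∈ N(U) \ U.
  set n₂ := orderOf x₀ with hn₂
  have hn₂0 : n₂ ≠ 0 := (orderOf_pos _).ne'
  set K := n₂.factorization q with hK
  set m := n₂ / q ^ K with hm
  set x := x₀ ^ m with hx
  have hxq : x ^ q ^ K = 1 := by
    rw [hx, ← pow_mul, mul_comm m _, Nat.ordProj_mul_ordCompl_eq_self n₂ q, hn₂]
    exact pow_orderOf_eq_one _
  have hxN : x ∈ N := pow_mem hx₀N m
  have hco_qm : Nat.Coprime q m := Nat.coprime_ordCompl hq hn₂0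
  have hxU : x ∉ U := by
    intro hc
    obtain ⟨a, b, hab⟩ : IsCoprime (q : ℤ) (m : ℤ) := hco_qm.isCoprime
    have hdec : x₀ = (x₀ ^ q) ^ a * (x₀ ^ m) ^ b := by
      rw [← zpow_natCast x₀ q, ← zpow_natCast x₀ m, ← zpow_mul, ← zpow_mul, ← zpow_add,
        show (q : ℤ) * a + (m : ℤ) * b = 1 by linarith, zpow_one]
    rw [hx] at hc
    exact hx₀U (hdec ▸ mul_mem (zpow_mem hx₀q a) (zpow_mem hc b))
  -- Primary parts of U.
  have hparts := fun (p : ℕ) (hp : p.Prime) => exists_primary_part U hUnil hp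
  choose Part hPartP hPartmem using hparts
  have hPartU : ∀ p hp, Part p hp ≤ U := fun p hp g hg => ((hPartmem p hp g).mp hg).1
  have hPartconj : ∀ p hp, ∀ y, y ∈ N → ∀ g ∈ Part p hp, y * g * y⁻¹ ∈ Part p hp := by
    intro p hp y hy g hg
    obtain ⟨hgU, k, hk⟩ := (hPartmem p hp g).mp hg
    refine (hPartmem p hp _).mpr ⟨(Subgroup.mem_normalizer_iff.mp hy g).mp hgU, k, ?_⟩
    rw [conj_pow, hk, mul_one, mul_inv_cancel]
  have hPartnormalizer : ∀ p hp, ∀ y, y ∈ N → y ∈ Subgroup.normalizer ((Part p hp : Subgroup G) : Set G) := by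
    intro p hp y hy
    rw [Subgroup.mem_normalizer_iff]
    intro g
    constructor
    · exact fun hg => hPartconj p hp y hy g hg
    · intro hg
      have := hPartconj p hp y⁻¹ (inv_mem hy) _ hg
      simpa [mul_assoc] using this
  have hPartdisj : ∀ p (hp : p.Prime) r (hr : r.Prime), p ≠ r →
      ∀ g, g ∈ Part p hp → g ∈ Part r hr → g = 1 := by
    intro p hp r hr hpr g h1 h2
    obtain ⟨-, k, hk⟩ := (hPartmem p hp g).mp h1
    obtain ⟨-, j, hj⟩ := (hPartmem r hr g).mp h2
    have hcop : Nat.Coprime (p ^ k) (r ^ j) :=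
      Nat.Coprime.pow _ _ ((Nat.coprime_primes hp hr).mpr hpr)
    have hdvd : orderOf g ∣ Nat.gcd (p ^ k) (r ^ j) :=
      Nat.dvd_gcd (orderOf_dvd_of_pow_eq_one hk) (orderOf_dvd_of_pow_eq_one hj)
    rw [Nat.Coprime.gcd_eq_one hcop] at hdvd
    exact orderOf_eq_one_iff.mp (Nat.dvd_one.mp hdvd)
  have hPartcomm : ∀ p (hp : p.Prime) r (hr : r.Prime), p ≠ r →
      ∀ g ∈ Part p hp, ∀ v ∈ Part r hr, Commute g v := by
    intro p hp r hr hpr g hg v hv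
    have hgN : g ∈ N := Subgroup.le_normalizer (hPartU p hp hg)
    have hvN : v ∈ N := Subgroup.le_normalizer (hPartU r hr hv)
    have c1 : (g * v * g⁻¹) * v⁻¹ ∈ Part r hr :=
      mul_mem (hPartconj r hr g hgN v hv) (inv_mem hv)
    have c2 : g * (v * g⁻¹ * v⁻¹) ∈ Part p hp :=
      mul_mem hg (hPartconj p hp v hvN g⁻¹ (inv_mem hg))
    have heq : g * (v * g⁻¹ * v⁻¹) = (g * v * g⁻¹) * v⁻¹ := by group
    have hone : (g * v * g⁻¹) * v⁻¹ = 1 :=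
      hPartdisj p hp r hr hpr _ (heq ▸ c2) c1
    have h2 : g * v * g⁻¹ = v := by rwa [mul_inv_eq_one] at hone
    show g * v = v * g
    calc g * v = (g * v * g⁻¹) * g := by group
      _ = v * g := by rw [h2]
  -- The key claim: x centralizes every primary part for p ≠ q.
  have hcent : ∀ p (hp : p.Prime), p ≠ q → ∀ v ∈ Part p hp, Commute x v := by
    intro p hp hpq
    have hxnorm : x ∈ Subgroup.normalizer ((Part p hp : Subgroup G) : Set G) := hPartnormalizer p hp x hxN
    have key : x ∈ Subgroup.centralizer ((Part p hp : Subgroup G) : Set G) := by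
      by_cases hnorm : (Part p hp).Normal
      · -- Fitting case: U_p is normal in G
        set C := Subgroup.centralizer ((Part p hp : Subgroup G) : Set G) with hC
        have hCnormal : C.Normal := by
          constructor
          intro c hc g
          rw [hC, Subgroup.mem_centralizer_iff] at hc ⊢
          intro v hv
          have hv' : g⁻¹ * v * g ∈ Part p hp := by
            have := hnorm.conj_mem v hv g⁻¹
            simpa [mul_assoc] using this
          have h1 := hc _ hv'
          calc v * (g * c * g⁻¹) = g * ((g⁻¹ * v * g) * c) * g⁻¹ := by group
            _ = g * (c * (g⁻¹ * v * g)) * g⁻¹ := by rw [h1]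
            _ = (g * c * g⁻¹) * v := by group
        set W := ⨆ (K' : Subgroup G) (_ : K'.Normal ∧ IsPGroup p K'), K' with hW
        have hWp : IsPGroup p W := by
          obtain ⟨S⟩ : Nonempty (Sylow p G) := inferInstance
          have hle : W ≤ S := by
            refine iSup_le fun K' => iSup_le fun hK' => ?_
            haveI := hK'.1
            have hKS : IsPGroup p ↥(K' ⊔ (S : Subgroup G)) :=
              IsPGroup.to_sup_of_normal_left hK'.2 S.isPGroup'
            have heq : (K' ⊔ (S : Subgroup G)) = S := S.is_maximal' hKS le_sup_right
            exact le_sup_left.trans heq.le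
          exact IsPGroup.to_le S.isPGroup' hle
        have hHle : ∀ H : Subgroup G, H.Normal ∧ Group.IsNilpotent ↥H → H ≤ W ⊔ C := by
          intro H hH
          refine le_of_primary_elements H (W ⊔ C) ?_
          intro g hgH r hr hro
          obtain ⟨P', hP'p, hP'mem⟩ := exists_primary_part H hH.2 hr
          have hgP' : g ∈ P' := (hP'mem g).mpr ⟨hgH, hro⟩
          have hP'normal : P'.Normal := by
            constructor
            intro v hv g'
            obtain ⟨hvH, k, hk⟩ := (hP'mem v).mp hv
            refine (hP'mem _).mpr ⟨hH.1.conj_mem v hvH g', k, ?_⟩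
            rw [conj_pow, hk, mul_one, mul_inv_cancel]
          by_cases hrp : r = p
          · rw [hrp] at hP'p
            have hPW : P' ≤ W :=
              le_iSup_of_le P' (le_iSup_of_le ⟨hP'normal, hP'p⟩ le_rfl)
            exact (le_sup_left : W ≤ W ⊔ C) (hPW hgP')
          · have hcomm' : ∀ v ∈ Part p hp, Commute g v := by
              intro v hv
              have c1 : (g * v * g⁻¹) * v⁻¹ ∈ Part p hp :=
                mul_mem (hnorm.conj_mem v hv g) (inv_mem hv)
              have c2 : g * (v * g⁻¹ * v⁻¹) ∈ P' := by
                refine mul_mem hgP' ?_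
                have := hP'normal.conj_mem g⁻¹ (inv_mem hgP') v
                simpa [mul_assoc] using this
              have heq : g * (v * g⁻¹ * v⁻¹) = (g * v * g⁻¹) * v⁻¹ := by group
              have hone : (g * v * g⁻¹) * v⁻¹ = 1 := by
                set c := (g * v * g⁻¹) * v⁻¹ with hc_def
                obtain ⟨-, k, hk⟩ := (hP'mem c).mp (heq ▸ c2)
                obtain ⟨-, j, hj⟩ := (hPartmem p hp c).mp c1
                have hcop : Nat.Coprime (r ^ k) (p ^ j) :=
                  Nat.Coprime.pow _ _ ((Nat.coprime_primes hr hp).mpr hrp)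
                have hdvd : orderOf c ∣ Nat.gcd (r ^ k) (p ^ j) :=
                  Nat.dvd_gcd (orderOf_dvd_of_pow_eq_one hk) (orderOf_dvd_of_pow_eq_one hj)
                rw [Nat.Coprime.gcd_eq_one hcop] at hdvd
                exact orderOf_eq_one_iff.mp (Nat.dvd_one.mp hdvd)
              have h2 : g * v * g⁻¹ = v := by rwa [mul_inv_eq_one] at hone
              show g * v = v * g
              calc g * v = (g * v * g⁻¹) * g := by group
                _ = v * g := by rw [h2]
            have hgC : g ∈ C := by
              rw [hC, Subgroup.mem_centralizer_iff]
              intro v hv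
              exact (hcomm' v hv).symm
            exact (le_sup_right : C ≤ W ⊔ C) hgC
        have hUle : U ≤ W ⊔ C := by
          refine le_of_primary_elements U (W ⊔ C) ?_
          intro g hgU r hr hro
          by_cases hrp : r = p
          · rw [hrp] at hro
            have hgP : g ∈ Part p hp := (hPartmem p hp g).mpr ⟨hgU, hro⟩
            have hPW : Part p hp ≤ W :=
              le_iSup_of_le (Part p hp) (le_iSup_of_le ⟨hnorm, hPartP p hp⟩ le_rfl)
            exact (le_sup_left : W ≤ W ⊔ C) (hPW hgP)
          · have hgP : g ∈ Part r hr := (hPartmem r hr g).mpr ⟨hgU, hro⟩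
            have hgC : g ∈ C := by
              rw [hC, Subgroup.mem_centralizer_iff]
              intro v hv
              exact (hPartcomm r hr p hp hrp g hgP v hv).symm
            exact (le_sup_right : C ≤ W ⊔ C) hgC
        have htop : W ⊔ C = ⊤ := by
          rw [eq_top_iff, ← hFU, sup_le_iff]
          constructor
          · show FittingSubgroup G ≤ W ⊔ C
            unfold FittingSubgroup
            exact iSup_le fun H => iSup_le fun hH => hHle H hH
          · exact hUle
        haveI := hCnormal
        set π := QuotientGroup.mk' C with hπ
        have h1 : (π x) ^ q ^ K = 1 := by rw [← map_pow, hxq, map_one]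
        have hx' : π x ∈ W.map π := by
          have hmaps : (⊤ : Subgroup G).map π = W.map π := by
            rw [← htop, Subgroup.map_sup]
            have : C.map π = ⊥ := by
              rw [Subgroup.map_eq_bot_iff, QuotientGroup.ker_mk']
            rw [this, sup_bot_eq]
          have hmem : π x ∈ (⊤ : Subgroup G).map π := ⟨x, Subgroup.mem_top x, rfl⟩
          rwa [hmaps] at hmem
        obtain ⟨j, hj⟩ := (hWp.map π) ⟨π x, hx'⟩
        have h2 : (π x) ^ p ^ j = 1 := by
          have := congrArg (Subtype.val) hj
          simpa using this
        have hdvd : orderOf (π x) ∣ Nat.gcd (q ^ K) (p ^ j) :=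
          Nat.dvd_gcd (orderOf_dvd_of_pow_eq_one h1) (orderOf_dvd_of_pow_eq_one h2)
        have hcop : Nat.Coprime (q ^ K) (p ^ j) :=
          Nat.Coprime.pow _ _ ((Nat.coprime_primes hq hp).mpr (Ne.symm hpq))
        rw [Nat.Coprime.gcd_eq_one hcop] at hdvd
        have hone : π x = 1 := orderOf_eq_one_iff.mp (Nat.dvd_one.mp hdvd)
        rwa [hπ, QuotientGroup.mk'_apply, QuotientGroup.eq_one_iff] at hone
      · -- Frobenius case
        have hFNC : IsPGroup p (Subgroup.normalizer ((Part p hp : Subgroup G) : Set G) ⧸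
            (Subgroup.centralizer ((Part p hp : Subgroup G) : Set G)).subgroupOf
              (Subgroup.normalizer ((Part p hp : Subgroup G) : Set G))) :=
          h p (Part p hp) hp (hPartP p hp) hnorm
        set ξ : ↥(Subgroup.normalizer ((Part p hp : Subgroup G) : Set G)) := ⟨x, hxnorm⟩ with hξdef
        set π := QuotientGroup.mk'
          ((Subgroup.centralizer ((Part p hp : Subgroup G) : Set G)).subgroupOf
            (Subgroup.normalizer ((Part p hp : Subgroup G) : Set G))) with hπ
        have h1 : (π ξ) ^ q ^ K = 1 := by
          rw [← map_pow]
          have : ξ ^ q ^ K = 1 := Subtype.ext (by simpa using hxq)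
          rw [this, map_one]
        obtain ⟨j, h2⟩ := hFNC (π ξ)
        have hdvd : orderOf (π ξ) ∣ Nat.gcd (q ^ K) (p ^ j) :=
          Nat.dvd_gcd (orderOf_dvd_of_pow_eq_one h1) (orderOf_dvd_of_pow_eq_one h2)
        have hcop : Nat.Coprime (q ^ K) (p ^ j) :=
          Nat.Coprime.pow _ _ ((Nat.coprime_primes hq hp).mpr (Ne.symm hpq))
        rw [Nat.Coprime.gcd_eq_one hcop] at hdvd
        have hone : π ξ = 1 := orderOf_eq_one_iff.mp (Nat.dvd_one.mp hdvd)
        rw [hπ, QuotientGroup.mk'_apply, QuotientGroup.eq_one_iff] at hone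
        exact (Subgroup.mem_subgroupOf).mp hone
    intro v hv
    exact (Subgroup.mem_centralizer_iff.mp key v hv).symm
  -- Final assembly.
  set Uq := Part q hq with hUqdef
  have hzx : IsPGroup q (Subgroup.zpowers x) := by
    intro g
    obtain ⟨i, hi⟩ := g.2
    refine ⟨K, Subtype.ext ?_⟩
    have hgx : (g : G) ^ q ^ K = 1 := by
      rw [← hi, ← zpow_natCast (x ^ i) (q ^ K), ← zpow_mul, mul_comm i ((q ^ K : ℕ) : ℤ),
        zpow_mul, zpow_natCast, hxq, one_zpow]
    simpa using hgx
  have hxUqnorm : Subgroup.zpowers x ≤ Subgroup.normalizer (Uq : Set G) :=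
    (Subgroup.zpowers_le).mpr (hPartnormalizer q hq x hxN)
  have hR : IsPGroup q ↥(Subgroup.zpowers x ⊔ Uq) :=
    IsPGroup.to_sup_of_normal_right' hzx (hPartP q hq) hxUqnorm
  haveI := Fact.mk hq
  have hRnil : Group.IsNilpotent ↥(Subgroup.zpowers x ⊔ Uq) := hR.isNilpotent
  set V := ⨆ (p : ℕ) (hp : p.Prime ∧ p ≠ q), Part p hp.1 with hV
  have hVU : V ≤ U := iSup_le fun p => iSup_le fun hp => hPartU p hp.1
  have hVnil : Group.IsNilpotent ↥V := by
    haveI : Group.IsNilpotent ↥U := hUnil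
    haveI : Group.IsNilpotent ↥(V.subgroupOf U) := Subgroup.isNilpotent _
    exact nilpotent_of_mulEquiv (Subgroup.subgroupOfEquivOfLe hVU)
  have hRC : Subgroup.zpowers x ⊔ Uq ≤ Subgroup.centralizer (V : Set G) := by
    refine sup_le ?_ ?_
    · rw [Subgroup.le_centralizer_iff]
      refine iSup_le fun p => iSup_le fun hp => ?_
      intro g hg
      rw [Subgroup.mem_centralizer_iff]
      rintro y ⟨i, rfl⟩
      show x ^ i * g = g * x ^ i
      exact (hcent p hp.1 hp.2 g hg).zpow_left i
    · rw [Subgroup.le_centralizer_iff]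
      refine iSup_le fun p => iSup_le fun hp => ?_
      intro g hg
      rw [Subgroup.mem_centralizer_iff]
      intro y hy
      exact (hPartcomm p hp.1 q hq hp.2 g hg y hy).symm
  have hKnil : Group.IsNilpotent ↥((Subgroup.zpowers x ⊔ Uq) ⊔ V) :=
    isNilpotent_sup_of_centralizer _ _ hRnil hVnil hRC
  have hUK : U ≤ (Subgroup.zpowers x ⊔ Uq) ⊔ V := by
    refine le_of_primary_elements U _ ?_
    intro g hg r hr hro
    by_cases hrq : r = q
    · rw [hrq] at hro
      have : g ∈ Uq := (hPartmem q hq g).mpr ⟨hg, hro⟩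
      exact ((le_sup_right.trans le_sup_left :
        Uq ≤ (Subgroup.zpowers x ⊔ Uq) ⊔ V)) this
    · have hgP : g ∈ Part r hr := (hPartmem r hr g).mpr ⟨hg, hro⟩
      have hPV : Part r hr ≤ V := le_iSup_of_le r (le_iSup_of_le ⟨hr, hrq⟩ le_rfl)
      exact (le_sup_right : V ≤ _) (hPV hgP)
  have hfinal := hUmax ((Subgroup.zpowers x ⊔ Uq) ⊔ V) hKnil hUK
  exact hxU (hfinal ▸ (le_sup_left.trans le_sup_left :
    Subgroup.zpowers x ≤ (Subgroup.zpowers x ⊔ Uq) ⊔ V) (Subgroup.mem_zpowers x))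
end

section
/- Let G be a finite non-nilpotent group in which every non-subnormal primary subgroup satisfies the Frobenius normalizer condition, and let E be a nilpotent subgroup of G with F_0(G) ∩ E = 1 and F_0(G)E = G. Then the normalizer N_G(E) is a Carter subgroup of G. -/
open Subgroup

open Pointwise

section Aux
variable {G : Type*} [Group G]

theorem myRange_eq (H K : Subgroup G)
    (hc : ∀ (m : H) (n : K), Commute (H.subtype m) (K.subtype n)) :
    (MonoidHom.noncommCoprod H.subtype K.subtype hc).range = H ⊔ K := by
  apply le_antisymm
  · rintro x ⟨⟨m, n⟩, rfl⟩
    exact mul_mem ((le_sup_left : H ≤ H ⊔ K) m.2) ((le_sup_right : K ≤ H ⊔ K) n.2)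
  · refine sup_le ?_ ?_ <;> intro x hx
    · exact ⟨(⟨x, hx⟩, 1), by simp [MonoidHom.noncommCoprod]⟩
    · exact ⟨(1, ⟨x, hx⟩), by simp [MonoidHom.noncommCoprod]⟩

theorem myCard_sup_dvd [Finite G] (H K : Subgroup G)
    (hc : ∀ (m : H) (n : K), Commute (H.subtype m) (K.subtype n)) :
    Nat.card ↥(H ⊔ K) ∣ Nat.card H * Nat.card K := by
  set φ := MonoidHom.noncommCoprod H.subtype K.subtype hc with hφ
  have h1 : Nat.card ↥(H ⊔ K) = Nat.card φ.range := by rw [myRange_eq]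
  have h2 : Nat.card φ.range = φ.ker.index := by
    rw [Subgroup.index_eq_card]
    exact (Nat.card_congr (QuotientGroup.quotientKerEquivRange φ).toEquiv).symm
  rw [h1, h2, ← Nat.card_prod]
  exact Subgroup.index_dvd_card _

theorem myNilpotent_sup (H K : Subgroup G)
    (hc : ∀ (m : H) (n : K), Commute (H.subtype m) (K.subtype n))
    (hH : Group.IsNilpotent H) (hK : Group.IsNilpotent K) :
    Group.IsNilpotent ↥(H ⊔ K) := by
  haveI := hH; haveI := hK
  have h : Group.IsNilpotent (MonoidHom.noncommCoprod H.subtype K.subtype hc).range :=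
    nilpotent_of_surjective _ (MonoidHom.rangeRestrict_surjective _)
  rwa [myRange_eq] at h

end Aux

section FpSec
variable (G : Type*) [Group G] [Finite G]

def myFp (p : ℕ) : Subgroup G :=
  ⨆ (_ : p.Prime) (P : Sylow p G) (_ : (P : Subgroup G).Normal), (P : Subgroup G)

theorem normalSylowProduct_eq_iSup : normalSylowProduct G = ⨆ p, myFp G p := rfl

theorem myFp_normal (p : ℕ) : (myFp G p).Normal := by
  apply Subgroup.normal_iSup_of_normal; intro _
  apply Subgroup.normal_iSup_of_normal; intro P
  apply Subgroup.normal_iSup_of_normal; intro hP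
  exact hP

theorem myFp_cases (p : ℕ) :
    myFp G p = ⊥ ∨ (p.Prime ∧ ∃ P : Sylow p G, (P : Subgroup G).Normal ∧ myFp G p = P) := by
  by_cases hp : p.Prime
  · by_cases hex : ∃ P : Sylow p G, (P : Subgroup G).Normal
    · obtain ⟨P, hP⟩ := hex
      right
      refine ⟨hp, P, hP, ?_⟩
      haveI := Fact.mk hp
      haveI : (P : Subgroup G).Normal := hP
      haveI := Sylow.unique_of_normal P hP
      apply le_antisymm
      · refine iSup_le fun _ => iSup_le fun Q => iSup_le fun hQ => ?_
        rw [Subsingleton.elim Q P]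
      · exact le_iSup_of_le hp (le_iSup_of_le P (le_iSup_of_le hP le_rfl))
    · exact Or.inl (le_bot_iff.mp (iSup_le fun _ => iSup_le fun Q => iSup_le fun hQ =>
        absurd ⟨Q, hQ⟩ hex))
  · exact Or.inl (le_bot_iff.mp (iSup_le fun hp' => absurd hp' hp))

theorem myFp_nilpotent (p : ℕ) : Group.IsNilpotent ↥(myFp G p) := by
  rcases myFp_cases G p with h | ⟨hp, P, hP, heq⟩
  · rw [h]; infer_instance
  · haveI := Fact.mk hp
    rw [heq]
    exact P.isPGroup'.isNilpotent

theorem myFp_le_centralizer (p q : ℕ) (hne : p ≠ q) :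
    myFp G p ≤ Subgroup.centralizer (myFp G q) := by
  intro x hx
  rw [Subgroup.mem_centralizer_iff]
  intro y hy
  rcases myFp_cases G p with h | ⟨hp, P, hP, heqP⟩
  · rw [h, Subgroup.mem_bot] at hx; subst hx; simp
  rcases myFp_cases G q with h' | ⟨hq, Q, hQ, heqQ⟩
  · simp only [h', Subgroup.coe_bot, Set.mem_singleton_iff] at hy; subst hy; simp
  haveI := Fact.mk hp; haveI := Fact.mk hq
  have hdis : Disjoint (myFp G q) (myFp G p) := by
    rw [heqP, heqQ]
    exact IsPGroup.disjoint_of_ne q p (Ne.symm hne) _ _ Q.isPGroup' P.isPGroup'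
  exact Subgroup.commute_of_normal_of_disjoint _ _ (myFp_normal G q) (myFp_normal G p)
    hdis y x hy hx

theorem myFp_sup_props (s : Finset ℕ) :
    (s.sup (myFp G)).Normal ∧ Group.IsNilpotent ↥(s.sup (myFp G)) ∧
    (∀ q : ℕ, q.Prime → q ∣ Nat.card ↥(s.sup (myFp G)) →
      ∃ P : Sylow q G, (P : Subgroup G).Normal) ∧
    ∀ q ∉ s, s.sup (myFp G) ≤ Subgroup.centralizer (myFp G q) := by
  classical
  induction s using Finset.induction_on with
  | empty =>
    refine ⟨by simp only [Finset.sup_empty]; infer_instance,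
      by rw [Finset.sup_empty]; infer_instance, ?_, ?_⟩
    · intro q hq hdvd
      simp only [Finset.sup_empty, Subgroup.card_bot, Nat.dvd_one] at hdvd
      exact absurd hdvd hq.ne_one
    · intro q _; simp only [Finset.sup_empty]; exact bot_le
  | @insert a s' ha ih =>
    obtain ⟨ihn, ihnil, ihcard, ihcent⟩ := ih
    haveI := ihn
    have hcomm : ∀ (m : ↥(myFp G a)) (n : ↥(s'.sup (myFp G))),
        Commute ((myFp G a).subtype m) ((s'.sup (myFp G)).subtype n) := by
      intro m n
      exact ((Subgroup.mem_centralizer_iff.mp (ihcent a ha n.2)) m m.2)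
    haveI := myFp_normal G a
    refine ⟨?_, ?_, ?_, ?_⟩
    · rw [Finset.sup_insert]; infer_instance
    · rw [Finset.sup_insert]
      exact myNilpotent_sup _ _ hcomm (myFp_nilpotent G a) ihnil
    · rw [Finset.sup_insert]
      intro q hq hdvd
      have hdvd2 : q ∣ Nat.card ↥(myFp G a) * Nat.card ↥(s'.sup (myFp G)) :=
        dvd_trans hdvd (myCard_sup_dvd _ _ hcomm)
      rcases (Nat.Prime.dvd_mul hq).mp hdvd2 with h' | h'
      · rcases myFp_cases G a with hb | ⟨hpa, P, hP, heq⟩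
        · rw [hb, Subgroup.card_bot, Nat.dvd_one] at h'
          exact absurd h' hq.ne_one
        · haveI := Fact.mk hpa
          rw [heq] at h'
          obtain ⟨n, hn⟩ := IsPGroup.iff_card.mp P.isPGroup'
          rw [hn] at h'
          have : q = a := (Nat.prime_dvd_prime_iff_eq hq hpa).mp (hq.dvd_of_dvd_pow h')
          subst this
          exact ⟨P, hP⟩
      · exact ihcard q hq h'
    · intro q hqmem
      rw [Finset.mem_insert] at hqmem
      push_neg at hqmem
      rw [Finset.sup_insert]
      exact sup_le (myFp_le_centralizer G a q (fun h => hqmem.1 h.symm)) (ihcent q hqmem.2)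

theorem normalSylowProduct_eq_finsetSup :
    normalSylowProduct G = (Finset.range (Nat.card G + 1)).sup (myFp G) := by
  rw [normalSylowProduct_eq_iSup]
  apply le_antisymm
  · refine iSup_le fun p => ?_
    by_cases hple : p ∈ Finset.range (Nat.card G + 1)
    · exact Finset.le_sup hple
    · rcases myFp_cases G p with h | ⟨hp, P, hP, heq⟩
      · rw [h]; exact bot_le
      · haveI := Fact.mk hp
        obtain ⟨n, hn⟩ := IsPGroup.iff_card.mp P.isPGroup'
        have hcard : Nat.card ↥(P : Subgroup G) ∣ Nat.card G :=
          Subgroup.card_subgroup_dvd_card _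
        have hn0 : n = 0 := by
          by_contra hn0
          have hpdvd : p ∣ Nat.card G := by
            refine dvd_trans ?_ (hn ▸ hcard)
            exact dvd_pow_self p hn0
          have := Nat.le_of_dvd Nat.card_pos hpdvd
          exact hple (Finset.mem_range.mpr (by omega))
        have : (P : Subgroup G) = ⊥ :=
          Subgroup.eq_bot_of_card_eq _ (by rw [hn, hn0, pow_zero])
        rw [heq, this]; exact bot_le
  · exact Finset.sup_le fun p _ => le_iSup (myFp G) p

end FpSec

theorem normalizer_complement_is_carter_of_frobenius_nonsubnormal
    (G : Type*) [Group G] [Finite G] (hnil : ¬Group.IsNilpotent G)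
    (h : ∀ (p : ℕ) (P : Subgroup G), p.Prime → IsPGroup p P → ¬_root_.IsSubnormal P → FrobeniusNC p P)
    (E : Subgroup G) (hE : Group.IsNilpotent E)
    (hEinf : normalSylowProduct G ⊓ E = ⊥)
    (hEsup : normalSylowProduct G ⊔ E = ⊤) :
    IsCarterSubgroup (Subgroup.normalizer (E : Set G)) := by
  classical
  set F := normalSylowProduct G with hF
  haveI hFnormal : F.Normal := normalSylowProduct_normal G
  obtain ⟨_, hFnilp', hFkey', _⟩ := myFp_sup_props G (Finset.range (Nat.card G + 1))
  rw [← normalSylowProduct_eq_finsetSup] at hFnilp' hFkey'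
  have hFnilp : Group.IsNilpotent ↥F := hFnilp'
  have hFkey : ∀ q : ℕ, q.Prime → q ∣ Nat.card ↥F →
      ∃ P : Sylow q G, (P : Subgroup G).Normal := hFkey'
  have hdis : Disjoint F E := disjoint_iff.mpr hEinf
  have hmulset : (F : Set G) * (E : Set G) = Set.univ := by
    rw [← Subgroup.normal_mul, hEsup, Subgroup.coe_top]
  have hcompl : Subgroup.IsComplement' F E :=
    Subgroup.isComplement'_of_disjoint_and_mul_eq_univ hdis hmulset
  have hmul : Nat.card F * Nat.card E = Nat.card G := hcompl.card_mul
  have hcop : Nat.Coprime (Nat.card F) (Nat.card E) := by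
    by_contra hc
    obtain ⟨q, hq', hqF, hqE⟩ := Nat.Prime.not_coprime_iff_dvd.mp hc
    have hq : q.Prime := hq'
    obtain ⟨P, hP⟩ := hFkey q hq hqF
    haveI := Fact.mk hq
    have hPle : (P : Subgroup G) ≤ F := by
      have step1 : (P : Subgroup G) ≤ myFp G q :=
        le_iSup_of_le hq (le_iSup_of_le P (le_iSup_of_le hP le_rfl))
      rw [hF, normalSylowProduct_eq_iSup]
      exact le_trans step1 (le_iSup (myFp G) q)
    have hcard : Nat.card ↥(P : Subgroup G) = q ^ (Nat.card G).factorization q :=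
      P.card_eq_multiplicity
    have h1 : q ^ ((Nat.card G).factorization q) ∣ Nat.card F :=
      hcard ▸ Subgroup.card_dvd_of_le hPle
    have h2 : q ^ ((Nat.card G).factorization q + 1) ∣ Nat.card F * Nat.card E := by
      rw [pow_succ]
      exact mul_dvd_mul h1 hqE
    rw [hmul] at h2
    have h3 := (Nat.Prime.pow_dvd_iff_le_factorization hq
      (Nat.card_pos (α := G)).ne').mp h2
    omega
  have hdecomp : ∀ g : G, ∃ f ∈ F, ∃ e ∈ E, f * e = g := by
    intro g
    have hg : g ∈ (F : Set G) * (E : Set G) := by rw [hmulset]; trivial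
    simpa [Set.mem_mul] using hg
  have hC1 : ∀ f : G, f ∈ F → f ∈ (Subgroup.normalizer (E : Set G)) → ∀ e ∈ E, f * e = e * f := by
    intro f hfF hfN e he
    have h1 : f⁻¹ * e⁻¹ * f * e ∈ F := by
      have hconj : e⁻¹ * f * e ∈ F := by
        have := hFnormal.conj_mem f hfF e⁻¹
        simpa using this
      have := mul_mem (F.inv_mem hfF) hconj
      simpa [mul_assoc] using this
    have h2 : f⁻¹ * e⁻¹ * f * e ∈ E := by
      have hfN' : f⁻¹ ∈ (Subgroup.normalizer (E : Set G)) := (Subgroup.normalizer (E : Set G)).inv_mem hfN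
      have hc : f⁻¹ * e⁻¹ * f ∈ E := by
        have := (Subgroup.mem_normalizer_iff.mp hfN' e⁻¹).mp (E.inv_mem he)
        simpa using this
      exact mul_mem hc he
    have h3 : f⁻¹ * e⁻¹ * f * e ∈ F ⊓ E := ⟨h1, h2⟩
    rw [hEinf, Subgroup.mem_bot] at h3
    have h5 := congrArg (fun x => e * f * x) h3
    simpa [mul_assoc] using h5
  set N := (Subgroup.normalizer (E : Set G)) with hN
  have hEN : E ≤ N := Subgroup.le_normalizer
  set C := F ⊓ N with hC
  have hCcent : ∀ c ∈ C, ∀ e ∈ E, c * e = e * c := fun c hc => hC1 c hc.1 hc.2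
  have hNeq : N = C ⊔ E := by
    apply le_antisymm
    · intro n hn
      obtain ⟨f, hf, e, he, hfe⟩ := hdecomp n
      have hfN : f ∈ N := by
        have hfeq : f = n * e⁻¹ := by rw [← hfe]; group
        rw [hfeq]
        exact mul_mem hn (hEN (E.inv_mem he))
      have hfC : f ∈ C := ⟨hf, hfN⟩
      rw [← hfe]
      exact mul_mem ((le_sup_left : C ≤ C ⊔ E) hfC) ((le_sup_right : E ≤ C ⊔ E) he)
    · exact sup_le inf_le_right hEN
  have hCnilp : Group.IsNilpotent ↥C := by
    haveI := hFnilp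
    exact nilpotent_of_mulEquiv (Subgroup.subgroupOfEquivOfLe (inf_le_left : C ≤ F))
  have hcommCE : ∀ (m : ↥C) (n : ↥E), Commute (C.subtype m) (E.subtype n) :=
    fun m n => hCcent m m.2 n n.2
  have hNnilp : Group.IsNilpotent ↥N := by
    rw [hNeq]
    exact myNilpotent_sup _ _ hcommCE hCnilp hE
  refine ⟨hNnilp, le_antisymm ?_ Subgroup.le_normalizer⟩
  intro g hg
  obtain ⟨f, hf, e, he, hfe⟩ := hdecomp g
  have hfNN : f ∈ (Subgroup.normalizer (N : Set G)) := by
    have hfeq : f = g * e⁻¹ := by rw [← hfe]; group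
    rw [hfeq]
    exact mul_mem hg (Subgroup.le_normalizer (hEN (E.inv_mem he)))
  have hkF : ∀ x ∈ E, x⁻¹ * f⁻¹ * x * f ∈ F := by
    intro x hx
    have hconj : x⁻¹ * f⁻¹ * x ∈ F := by
      have := hFnormal.conj_mem f⁻¹ (F.inv_mem hf) x⁻¹
      simpa using this
    exact mul_mem hconj hf
  have hkN : ∀ x ∈ E, x⁻¹ * f⁻¹ * x * f ∈ N := by
    intro x hx
    have hfN' : f⁻¹ ∈ (Subgroup.normalizer (N : Set G)) := (Subgroup.normalizer (N : Set G)).inv_mem hfNN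
    have h1 : f⁻¹ * x * f ∈ N := by
      have := (Subgroup.mem_normalizer_iff.mp hfN' x).mp (hEN hx)
      simpa using this
    have := mul_mem (hEN (E.inv_mem hx)) h1
    simpa [mul_assoc] using this
  have hkC : ∀ x ∈ E, ∀ e' ∈ E, (x⁻¹ * f⁻¹ * x * f) * e' = e' * (x⁻¹ * f⁻¹ * x * f) :=
    fun x hx => hC1 _ (hkF x hx) (hkN x hx)
  have hkmul : ∀ x ∈ E, ∀ y ∈ E,
      (x*y)⁻¹ * f⁻¹ * (x*y) * f = (x⁻¹ * f⁻¹ * x * f) * (y⁻¹ * f⁻¹ * y * f) := by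
    intro x hx y hy
    have hstep : (x*y)⁻¹ * f⁻¹ * (x*y) * f
        = y⁻¹ * ((x⁻¹ * f⁻¹ * x * f) * y) * (y⁻¹ * f⁻¹ * y * f) := by group
    rw [hstep, hkC x hx y hy]
    group
  have hkone : ∀ x ∈ E, x⁻¹ * f⁻¹ * x * f = 1 := by
    intro x hx
    have hkpow : ∀ n : ℕ, (x ^ n)⁻¹ * f⁻¹ * (x ^ n) * f = (x⁻¹ * f⁻¹ * x * f) ^ n := by
      intro n
      induction n with
      | zero => group
      | succ n ihp =>
        rw [pow_succ, hkmul (x^n) (pow_mem hx n) x hx, ihp, pow_succ]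
    have h1 : (x⁻¹ * f⁻¹ * x * f) ^ (orderOf x) = 1 := by
      rw [← hkpow (orderOf x), pow_orderOf_eq_one]
      group
    have h2 : orderOf (x⁻¹ * f⁻¹ * x * f) ∣ orderOf x := orderOf_dvd_of_pow_eq_one h1
    have h3 : orderOf x ∣ Nat.card E := by
      have := orderOf_dvd_natCard (⟨x, hx⟩ : E)
      rwa [Subgroup.orderOf_mk] at this
    have h4 : orderOf (x⁻¹ * f⁻¹ * x * f) ∣ Nat.card F := by
      have := orderOf_dvd_natCard (⟨_, hkF x hx⟩ : F)
      rwa [Subgroup.orderOf_mk] at this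
    have h5 : orderOf (x⁻¹ * f⁻¹ * x * f) ∣ Nat.card E := dvd_trans h2 h3
    have hg1 : Nat.gcd (Nat.card F) (Nat.card E) = 1 := hcop
    have h6 : orderOf (x⁻¹ * f⁻¹ * x * f) = 1 :=
      Nat.dvd_one.mp (hg1 ▸ Nat.dvd_gcd h4 h5)
    exact orderOf_eq_one_iff.mp h6
  have hfcent : ∀ e' ∈ E, f * e' = e' * f := by
    intro e' he'
    have h5 := congrArg (fun t => f * (e' * t)) (hkone e' he')
    simpa [mul_assoc] using h5.symm
  have hfNmem : f ∈ N := by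
    rw [hN]
    rw [Subgroup.mem_normalizer_iff]
    intro y
    constructor
    · intro hy
      have hyy : f * y * f⁻¹ = y := by rw [hfcent y hy]; group
      rw [hyy]; exact hy
    · intro hy
      have h7 := hfcent _ hy
      have h8 : f * (f * y * f⁻¹) = f * y := by rw [h7]; group
      have h9 := mul_left_cancel h8
      rw [← h9]; exact hy
  rw [← hfe]
  exact mul_mem hfNmem (hEN he)
end

section
/- Let G be a finite group, let F_0 be the product of all normal Sylow subgroups of G, and suppose there exists a nilpotent subgroup E of G with F_0 ∩ E = 1 and F_0 E = G. Then every non-subnormal primary subgroup of G satisfies the Frobenius normalizer condition in G. -/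
open Subgroup

open scoped commutatorElement

lemma aux_card_sup_dvd {G : Type*} [Group G] [Finite G] (A B : Subgroup G) [B.Normal] :
    Nat.card ↥(A ⊔ B) ∣ Nat.card ↥A * Nat.card ↥B := by
  have h1 : Nat.card ↥(A ⊔ B) =
      Nat.card ((↥(A ⊔ B)) ⧸ (B.subgroupOf (A ⊔ B))) * Nat.card ↥(B.subgroupOf (A ⊔ B)) :=
    Subgroup.card_eq_card_quotient_mul_card_subgroup _
  have h2 : Nat.card ((↥(A ⊔ B)) ⧸ (B.subgroupOf (A ⊔ B))) = Nat.card (↥A ⧸ (B.subgroupOf A)) :=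
    (Nat.card_congr (QuotientGroup.quotientInfEquivProdNormalQuotient A B).toEquiv).symm
  have h3 : Nat.card ↥(B.subgroupOf (A ⊔ B)) = Nat.card ↥B :=
    Nat.card_congr (Subgroup.subgroupOfEquivOfLe le_sup_right).toEquiv
  rw [h1, h2, h3]
  exact Nat.mul_dvd_mul_right (Subgroup.card_quotient_dvd_card _) _

lemma aux_card_sSup {G : Type*} [Group G] [Finite G] {p : ℕ} (hp : p.Prime)
    (s : Set (Subgroup G)) (hs : ∀ H ∈ s, H.Normal ∧ ¬ p ∣ Nat.card ↥H) :
    (sSup s).Normal ∧ ¬ p ∣ Nat.card ↥(sSup s) := by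
  refine Set.Finite.induction_on (motive := fun (s : Set (Subgroup G)) _ => (∀ H ∈ s, H.Normal ∧ ¬ p ∣ Nat.card ↥H) →
      (sSup s).Normal ∧ ¬ p ∣ Nat.card ↥(sSup s)) s (Set.toFinite s) ?_ ?_ hs
  · intro _
    rw [sSup_empty]
    refine ⟨inferInstance, ?_⟩
    rw [Subgroup.card_bot]
    exact fun hd => hp.one_lt.ne' (Nat.dvd_one.mp hd)
  · intro a s' _ _ ih hs
    obtain ⟨hs'N, hs'd⟩ := ih (fun H hH => hs H (Set.mem_insert_of_mem _ hH))
    obtain ⟨haN, had⟩ := hs a (Set.mem_insert _ _)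
    rw [sSup_insert]
    haveI := hs'N; haveI := haN
    refine ⟨inferInstance, fun hd => ?_⟩
    have := hd.trans (aux_card_sup_dvd a (sSup s'))
    rcases (Nat.Prime.dvd_mul hp).mp this with h | h
    · exact had h
    · exact hs'd h

lemma aux_nsp_eq_sSup (G : Type*) [Group G] :
    normalSylowProduct G = sSup {H : Subgroup G |
      ∃ q : ℕ, q.Prime ∧ ∃ P0 : Sylow q G, (P0 : Subgroup G).Normal ∧ H = ↑P0} := by
  apply le_antisymm
  · refine iSup_le fun q => iSup_le fun hq => iSup_le fun P0 => iSup_le fun hn => ?_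
    exact le_sSup ⟨q, hq, P0, hn, rfl⟩
  · refine sSup_le ?_
    rintro H ⟨q, hq, P0, hn, rfl⟩
    exact le_iSup_of_le q (le_iSup_of_le hq (le_iSup_of_le P0 (le_iSup_of_le hn le_rfl)))

lemma aux_not_dvd_card_nsp {G : Type*} [Group G] [Finite G] {p : ℕ} (hp : p.Prime)
    (hno : ∀ P0 : Sylow p G, ¬ (P0 : Subgroup G).Normal) :
    ¬ p ∣ Nat.card ↥(normalSylowProduct G) := by
  rw [aux_nsp_eq_sSup]
  refine (aux_card_sSup hp _ ?_).2
  rintro H ⟨q, hq, P0, hn, rfl⟩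
  refine ⟨hn, fun hd => ?_⟩
  haveI : Fact q.Prime := ⟨hq⟩
  obtain ⟨k, hk⟩ := IsPGroup.iff_card.mp P0.isPGroup'
  rw [hk] at hd
  have hpq : p = q := (Nat.prime_dvd_prime_iff_eq hp hq).mp (hp.dvd_of_dvd_pow hd)
  subst hpq
  exact hno P0 hn

lemma aux_map_subgroupOf_normal {G : Type*} [Group G] (Q : Subgroup G) {A B : Subgroup ↥Q}
    (hAB : A ≤ B) (hn : (A.subgroupOf B).Normal) :
    ((A.map Q.subtype).subgroupOf (B.map Q.subtype)).Normal := by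
  constructor
  intro n hnmem g
  rw [Subgroup.mem_subgroupOf] at hnmem ⊢
  obtain ⟨a, haA, ha⟩ := hnmem
  obtain ⟨b, hbB, hb⟩ := g.2
  have key := hn.conj_mem ⟨a, hAB haA⟩ (Subgroup.mem_subgroupOf.mpr haA) ⟨b, hbB⟩
  rw [Subgroup.mem_subgroupOf] at key
  refine ⟨_, key, ?_⟩
  simp only [Subgroup.coe_subtype] at ha hb ⊢
  push_cast
  rw [ha, hb]

lemma aux_exists_normalizer_top {H : Type*} [Group H] [Finite H]
    (hnc : NormalizerCondition H) (K : Subgroup H) :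
    ∃ m, (fun K : Subgroup H => Subgroup.normalizer (K : Set H))^[m] K = ⊤ := by
  by_contra hc
  push_neg at hc
  have hlt : ∀ i : ℕ, (fun K : Subgroup H => Subgroup.normalizer (K : Set H))^[i] K < (fun K : Subgroup H => Subgroup.normalizer (K : Set H))^[i+1] K := by
    intro i
    rw [Function.iterate_succ_apply']
    exact hnc _ (lt_top_iff_ne_top.mpr (hc i))
  have hsm : StrictMono (fun i => (fun K : Subgroup H => Subgroup.normalizer (K : Set H))^[i] K) := strictMono_nat_of_lt_succ hlt
  obtain ⟨i, j, hij, hej⟩ :=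
    Finite.exists_ne_map_eq_of_infinite (fun i => (fun K : Subgroup H => Subgroup.normalizer (K : Set H))^[i] K)
  exact hij (hsm.injective hej)

lemma aux_subnormal {G : Type*} [Group G] [Finite G] {p : ℕ} [Fact p.Prime] {P Q : Subgroup G}
    (hQN : Q.Normal) (hQp : IsPGroup p Q) (hPQ : P ≤ Q) : _root_.IsSubnormal P := by
  haveI : Group.IsNilpotent ↥Q := hQp.isNilpotent
  obtain ⟨m, hm⟩ := aux_exists_normalizer_top
    (normalizerCondition_of_isNilpotent (G := ↥Q)) (P.subgroupOf Q)
  classical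
  refine ⟨m + 1, fun i => if i ≤ m then
      Subgroup.map Q.subtype ((fun K : Subgroup ↥Q => Subgroup.normalizer (K : Set ↥Q))^[i] (P.subgroupOf Q)) else ⊤, ?_, ?_, ?_⟩
  · simp [subgroupOf_map_subtype, inf_of_le_left hPQ]
  · simp
  · intro i hi
    have him : i ≤ m := Nat.lt_succ_iff.mp hi
    dsimp only
    beta_reduce
    rw [if_pos him]
    by_cases hieq : i = m
    · subst hieq
      rw [if_neg (by omega), hm]
      have hQeq : Subgroup.map Q.subtype ⊤ = Q :=
        (MonoidHom.range_eq_map Q.subtype).symm.trans (Subgroup.range_subtype Q)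
      rw [hQeq]
      exact ⟨le_top, inferInstance⟩
    · rw [if_pos (by omega)]
      rw [Function.iterate_succ_apply']
      exact ⟨Subgroup.map_mono Subgroup.le_normalizer,
        aux_map_subgroupOf_normal Q Subgroup.le_normalizer Subgroup.normal_in_normalizer⟩

lemma aux_zpowers_pgroup {H : Type*} [Group H] {q : ℕ} {b : ℕ} {x : H}
    (hx : x ^ q ^ b = 1) : IsPGroup q (Subgroup.zpowers x) := by
  intro g
  refine ⟨b, ?_⟩
  obtain ⟨k, hk⟩ := Subgroup.mem_zpowers_iff.mp g.2
  have : ((g : H)) ^ q ^ b = 1 := by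
    rw [← hk, ← zpow_natCast, ← zpow_mul, mul_comm, zpow_mul, zpow_natCast, hx, one_zpow]
  ext
  push_cast
  simpa using this

lemma aux_nilp_commute {H : Type*} [Group H] [Finite H] [Group.IsNilpotent H]
    {p q : ℕ} (hp : p.Prime) (hq : q.Prime) (hpq : p ≠ q) {x y : H} {a b : ℕ}
    (hx : x ^ p ^ a = 1) (hy : y ^ q ^ b = 1) : Commute x y := by
  haveI : Fact p.Prime := ⟨hp⟩
  haveI : Fact q.Prime := ⟨hq⟩
  have hsyl : ∀ (r : ℕ) (_ : Fact r.Prime) (R : Sylow r H), (R : Subgroup H).Normal :=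
    ((isNilpotent_of_finite_tfae (G := H)).out 0 3).mp (by infer_instance)
  obtain ⟨R, hR⟩ := (aux_zpowers_pgroup hx).exists_le_sylow
  obtain ⟨S, hS⟩ := (aux_zpowers_pgroup hy).exists_le_sylow
  have hRn : (R : Subgroup H).Normal := hsyl p ⟨hp⟩ R
  have hSn : (S : Subgroup H).Normal := hsyl q ⟨hq⟩ S
  have hdisj : Disjoint (R : Subgroup H) (S : Subgroup H) :=
    IsPGroup.disjoint_of_ne p q hpq _ _ R.isPGroup' S.isPGroup'
  have hxR : x ∈ (R : Subgroup H) := hR (Subgroup.mem_zpowers x)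
  have hyS : y ∈ (S : Subgroup H) := hS (Subgroup.mem_zpowers y)
  rw [← commutatorElement_eq_one_iff_commute]
  have hwR : ⁅x, y⁆ ∈ (R : Subgroup H) := by
    have h1 : y * x⁻¹ * y⁻¹ ∈ (R : Subgroup H) := by
      simpa using hRn.conj_mem x⁻¹ (inv_mem hxR) y
    have : ⁅x, y⁆ = x * (y * x⁻¹ * y⁻¹) := by group
    rw [this]
    exact mul_mem hxR h1
  have hwS : ⁅x, y⁆ ∈ (S : Subgroup H) := by
    have h1 : x * y * x⁻¹ ∈ (S : Subgroup H) := hSn.conj_mem y hyS x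
    have : ⁅x, y⁆ = (x * y * x⁻¹) * y⁻¹ := by group
    rw [this]
    exact mul_mem h1 (inv_mem hyS)
  exact (Subgroup.disjoint_def.mp hdisj) hwR hwS

lemma aux_q_case {G : Type*} [Group G] [Finite G] {p q : ℕ} (hp : p.Prime) (hq : q.Prime)
    (hqp : q ≠ p) {P N : Subgroup G} [N.Normal] (hPp : IsPGroup p P)
    (hdisj : ∀ w : G, w ∈ P → w ∈ N → w = 1)
    (hnil : Group.IsNilpotent (G ⧸ N)) {z : G} (hz : z ∈ Subgroup.normalizer (P : Set G)) {b : ℕ}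
    (hzo : z ^ q ^ b = 1) : z ∈ Subgroup.centralizer (P : Set G) := by
  rw [Subgroup.mem_centralizer_iff]
  intro g hg
  rw [SetLike.mem_coe] at hg
  obtain ⟨k, hk⟩ := hPp ⟨g, hg⟩
  have hgk : g ^ p ^ k = 1 := by
    have := congrArg (Subgroup.subtype P) hk
    simpa [map_pow] using this
  have hwP : ⁅z⁻¹, g⁻¹⁆ ∈ P := by
    have h1 : z⁻¹ * g⁻¹ * (z⁻¹)⁻¹ ∈ P :=
      (Subgroup.mem_normalizer_iff.mp (inv_mem hz) g⁻¹).mp (inv_mem hg)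
    have h2 : ⁅z⁻¹, g⁻¹⁆ = (z⁻¹ * g⁻¹ * (z⁻¹)⁻¹) * (g⁻¹)⁻¹ := by
      rw [commutatorElement_def]
    rw [h2]
    exact mul_mem h1 (inv_mem (inv_mem hg))
  have hwN : ⁅z⁻¹, g⁻¹⁆ ∈ N := by
    rw [← QuotientGroup.eq_one_iff (N := N)]
    haveI := hnil
    have hcz : ((QuotientGroup.mk' N) z) ^ q ^ b = 1 := by
      rw [← map_pow, hzo, map_one]
    have hcg : ((QuotientGroup.mk' N) g) ^ p ^ k = 1 := by
      rw [← map_pow, hgk, map_one]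
    have hcomm : Commute ((QuotientGroup.mk' N) z) ((QuotientGroup.mk' N) g) :=
      aux_nilp_commute hq hp hqp hcz hcg
    have : ((⁅z⁻¹, g⁻¹⁆ : G) : G ⧸ N) = (QuotientGroup.mk' N) ⁅z⁻¹, g⁻¹⁆ := rfl
    rw [this, map_commutatorElement, map_inv, map_inv]
    exact commutatorElement_eq_one_iff_commute.mpr hcomm.inv_left.inv_right
  have hw1 : ⁅z⁻¹, g⁻¹⁆ = 1 := hdisj _ hwP hwN
  have hC : Commute z⁻¹ g⁻¹ := commutatorElement_eq_one_iff_commute.mp hw1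
  have hC2 := hC.inv_left.inv_right
  rw [inv_inv, inv_inv] at hC2
  exact hC2.symm.eq

lemma aux_centralize {G : Type*} [Group G] [Finite G] {p : ℕ} (hp : p.Prime)
    {P N : Subgroup G} [N.Normal] (hPp : IsPGroup p P)
    (hdisj : ∀ w : G, w ∈ P → w ∈ N → w = 1)
    (hnil : Group.IsNilpotent (G ⧸ N)) :
    ∀ (n : ℕ) (y : G), y ∈ Subgroup.normalizer (P : Set G) → orderOf y = n → ¬ p ∣ n →
      y ∈ Subgroup.centralizer (P : Set G) := by
  intro n
  induction n using Nat.strong_induction_on with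
  | _ n ih =>
  intro y hy hyo hnd
  rcases Nat.eq_zero_or_pos n with rfl | hn0
  · exact absurd (dvd_zero p) hnd
  rcases eq_or_ne n 1 with rfl | hn1
  · have : y = 1 := orderOf_eq_one_iff.mp hyo
    rw [this]; exact one_mem _
  -- n ≥ 2
  set q := n.minFac with hqdef
  have hq : q.Prime := Nat.minFac_prime hn1
  have hqn : q ∣ n := Nat.minFac_dvd n
  have hqp : q ≠ p := fun h => hnd (h ▸ hqn)
  set b := n.factorization q with hbdef
  set c := q ^ b with hcdef
  have hcn : c ∣ n := Nat.ordProj_dvd n q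
  set m' := n / c with hmdef
  have hcm : c * m' = n := Nat.ordProj_mul_ordCompl_eq_self n q
  have hb0 : 0 < b := hq.factorization_pos_of_dvd hn0.ne' hqn
  have hc1 : 1 < c := Nat.one_lt_pow hb0.ne' hq.one_lt
  have hm0 : 0 < m' := by
    rcases Nat.eq_zero_or_pos m' with h | h
    · rw [h, mul_zero] at hcm; omega
    · exact h
  rcases eq_or_ne m' 1 with hm1 | hm1
  · -- n = q ^ b, prime power case
    have hceq : c = n := by rw [hm1, mul_one] at hcm; exact hcm
    have hyqb : y ^ c = 1 := by rw [hceq, ← hyo]; exact pow_orderOf_eq_one y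
    exact aux_q_case hp hq hqp hPp hdisj hnil hy hyqb
  · -- composite case
    have hm1' : 1 < m' := by omega
    have hcop : Nat.Coprime c m' := (Nat.coprime_ordCompl hq hn0.ne').pow_left b
    obtain ⟨u, v, huv⟩ : ∃ u v : ℤ, u * (c : ℤ) + v * (m' : ℤ) = 1 := by
      obtain ⟨u, v, huv⟩ := (Nat.isCoprime_iff_coprime.mpr hcop)
      exact ⟨u, v, huv⟩
    set A : G := (y ^ c) ^ u with hA
    set B : G := (y ^ m') ^ v with hB
    have hyn : y ^ n = 1 := by rw [← hyo]; exact pow_orderOf_eq_one y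
    have key : ∀ (s : ℕ) (t : ℤ), (y ^ s) ^ t = y ^ ((s : ℤ) * t) := fun s t => by
      rw [← zpow_natCast y s, ← zpow_mul]
    have hyzn : y ^ (n : ℤ) = 1 := by rw [zpow_natCast, hyn]
    have hAB : A * B = y := by
      rw [hA, hB, key, key, ← zpow_add]
      have heq : (c : ℤ) * u + (m' : ℤ) * v = 1 := by
        rw [mul_comm (c : ℤ) u, mul_comm (m' : ℤ) v]; exact huv
      rw [heq, zpow_one]
    have hApow : A ^ m' = 1 := by
      rw [hA, key, ← zpow_natCast (y ^ ((c : ℤ) * u)) m', ← zpow_mul]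
      have heq : (c : ℤ) * u * (m' : ℤ) = (n : ℤ) * u := by push_cast [← hcm]; ring
      rw [heq, zpow_mul, hyzn, one_zpow]
    have hBpow : B ^ c = 1 := by
      rw [hB, key, ← zpow_natCast (y ^ ((m' : ℤ) * v)) c, ← zpow_mul]
      have heq : (m' : ℤ) * v * (c : ℤ) = (n : ℤ) * v := by push_cast [← hcm]; ring
      rw [heq, zpow_mul, hyzn, one_zpow]
    have hAdvd : orderOf A ∣ m' := orderOf_dvd_of_pow_eq_one hApow
    have hBdvd : orderOf B ∣ c := orderOf_dvd_of_pow_eq_one hBpow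
    have hAmem : A ∈ Subgroup.normalizer (P : Set G) := Subgroup.zpow_mem _ (pow_mem hy c) u
    have hBmem : B ∈ Subgroup.normalizer (P : Set G) := Subgroup.zpow_mem _ (pow_mem hy m') v
    have hmn : m' < n := by
      calc m' = n / c := rfl
      _ < n := Nat.div_lt_self hn0 hc1
    have hcln : c < n := by
      calc c < c * m' := (Nat.lt_mul_iff_one_lt_right (by omega)).mpr hm1'
      _ = n := hcm
    have hmdvd : m' ∣ n := ⟨c, by rw [← hcm, mul_comm]⟩
    have hApd : ¬ p ∣ orderOf A := fun hd => hnd (dvd_trans (dvd_trans hd hAdvd) hmdvd)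
    have hBpd : ¬ p ∣ orderOf B := fun hd => hnd (dvd_trans (dvd_trans hd hBdvd) hcn)
    have hAlt : orderOf A < n := lt_of_le_of_lt (Nat.le_of_dvd hm0 hAdvd) hmn
    have hBlt : orderOf B < n := lt_of_le_of_lt (Nat.le_of_dvd (by omega) hBdvd) hcln
    have hAc := ih (orderOf A) hAlt A hAmem rfl hApd
    have hBc := ih (orderOf B) hBlt B hBmem rfl hBpd
    rw [← hAB]
    exact mul_mem hAc hBc

theorem frobenius_nonsubnormal_of_nilpotent_complement
    (G : Type*) [Group G] [Finite G]
    (h : ∃ E : Subgroup G, Group.IsNilpotent E ∧ normalSylowProduct G ⊓ E = ⊥ ∧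
      normalSylowProduct G ⊔ E = ⊤) :
    ∀ (p : ℕ) (P : Subgroup G), p.Prime → IsPGroup p P → ¬_root_.IsSubnormal P →
      FrobeniusNC p P := by
  intro p P hp hPp hns
  haveI : Fact p.Prime := ⟨hp⟩
  obtain ⟨E, hEnil, hEinf, hEsup⟩ := h
  set N := normalSylowProduct G with hNdef
  -- Step 0: there is no normal Sylow p-subgroup
  have hno : ∀ P0 : Sylow p G, ¬ (P0 : Subgroup G).Normal := by
    intro P0 h0
    obtain ⟨R, hR⟩ := hPp.exists_le_sylow
    haveI := Sylow.unique_of_normal P0 h0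
    have hRP0 : R = P0 := Subsingleton.elim R P0
    rw [hRP0] at hR
    exact hns (aux_subnormal h0 P0.isPGroup' hR)
  -- Step 1: p does not divide |N|
  have hnd : ¬ p ∣ Nat.card ↥N := aux_not_dvd_card_nsp hp hno
  -- disjointness of P and N on elements
  have hdisj : ∀ w : G, w ∈ P → w ∈ N → w = 1 := by
    intro w hwP hwN
    obtain ⟨k, hk⟩ := hPp ⟨w, hwP⟩
    have hwk : w ^ p ^ k = 1 := by
      have := congrArg (Subgroup.subtype P) hk
      simpa [map_pow] using this
    obtain ⟨j, _, hj⟩ := (Nat.dvd_prime_pow hp).mp (orderOf_dvd_of_pow_eq_one hwk)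
    rcases Nat.eq_zero_or_pos j with rfl | hj0
    · rw [pow_zero] at hj
      exact orderOf_eq_one_iff.mp hj
    · exfalso
      apply hnd
      have h1 : orderOf w ∣ Nat.card ↥N := by
        have := orderOf_dvd_natCard (⟨w, hwN⟩ : ↥N)
        rwa [Subgroup.orderOf_mk] at this
      exact dvd_trans (hj ▸ dvd_pow_self p hj0.ne') h1
  -- Step 2: G/N is nilpotent
  have hnil : Group.IsNilpotent (G ⧸ N) := by
    haveI := hEnil
    apply nilpotent_of_surjective ((QuotientGroup.mk' N).comp E.subtype)
    intro xb
    obtain ⟨x, rfl⟩ := QuotientGroup.mk_surjective xb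
    have hx : x ∈ N ⊔ E := hEsup ▸ Subgroup.mem_top x
    rw [← SetLike.mem_coe, Subgroup.normal_mul] at hx
    obtain ⟨nn, hnn, e, he, rfl⟩ := hx
    refine ⟨⟨e, he⟩, ?_⟩
    show QuotientGroup.mk' N e = QuotientGroup.mk (nn * e)
    rw [QuotientGroup.mk'_apply]
    show QuotientGroup.mk e = QuotientGroup.mk (nn * e)
    have : (QuotientGroup.mk (nn * e) : G ⧸ N) = QuotientGroup.mk nn * QuotientGroup.mk e := rfl
    rw [this, (QuotientGroup.eq_one_iff nn).mpr hnn, one_mul]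
  -- Step 3: conclude
  intro xb
  obtain ⟨x, rfl⟩ := QuotientGroup.mk_surjective xb
  set n := orderOf (x : G) with hn
  have hn0 : n ≠ 0 := (orderOf_pos (x : G)).ne'
  set a := n.factorization p with ha
  refine ⟨a, ?_⟩
  have hy : ((x : G) ^ p ^ a) ∈ Subgroup.centralizer (P : Set G) := by
    refine aux_centralize hp hPp hdisj hnil (orderOf ((x : G) ^ p ^ a)) _
      (pow_mem x.2 _) rfl ?_
    have : orderOf ((x : G) ^ p ^ a) = n / p ^ a := by
      rw [orderOf_pow, ← hn, Nat.gcd_eq_right (Nat.ordProj_dvd n p)]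
    rw [this]
    exact Nat.not_dvd_ordCompl hp hn0
  show (QuotientGroup.mk' ((Subgroup.centralizer (P : Set G)).subgroupOf (Subgroup.normalizer (P : Set G)))) x
      ^ p ^ a = 1
  rw [← map_pow, QuotientGroup.mk'_apply, QuotientGroup.eq_one_iff, Subgroup.mem_subgroupOf]
  have : ((x ^ p ^ a : ↥(Subgroup.normalizer (P : Set G))) : G) = (x : G) ^ p ^ a := by push_cast; rfl
  rw [this]
  exact hy
end

section
/- If G is a finite semi-nilpotent group, then F(G) is a maximal nilpotent subgroup of G. -/
open Subgroup

/-- A group is semi-nilpotent if the normalizer of every non-normal nilpotent subgroup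
is nilpotent. -/
def SemiNilpotent (G : Type*) [Group G] : Prop :=
  ∀ U : Subgroup G, Group.IsNilpotent U → ¬U.Normal → Group.IsNilpotent (Subgroup.normalizer (U : Set G))


/-! ### Auxiliary lemmas for the proof -/

section AuxBasic
variable {G : Type*} [Group G]

private lemma SN.nilpotent_of_le {V D : Subgroup G} (hV : Group.IsNilpotent V) (hle : D ≤ V) :
    Group.IsNilpotent D := by
  haveI := hV
  exact (Group.isNilpotent_congr (Subgroup.subgroupOfEquivOfLe hle)).mp inferInstance

private lemma SN.exists_maxNilp [Finite G] {V : Subgroup G} (hV : Group.IsNilpotent V) :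
    ∃ M : Subgroup G, V ≤ M ∧ Group.IsNilpotent M ∧
      ∀ U : Subgroup G, Group.IsNilpotent U → M ≤ U → U = M := by
  obtain ⟨M, ⟨hVM, hMnil⟩, hmax⟩ :=
    Set.Finite.exists_maximalFor id {U : Subgroup G | V ≤ U ∧ Group.IsNilpotent U}
      (Set.toFinite _) ⟨V, le_rfl, hV⟩
  exact ⟨M, hVM, hMnil, fun U hU hMU => le_antisymm (hmax ⟨hVM.trans hMU, hU⟩ hMU) hMU⟩

/-- Conjugation of subgroups. -/
private def SN.cj (g : G) (H : Subgroup G) : Subgroup G := H.map (MulAut.conj g).toMonoidHom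

private lemma SN.mem_cj {g x : G} {H : Subgroup G} : x ∈ SN.cj g H ↔ g⁻¹ * x * g ∈ H := by
  rw [SN.cj, Subgroup.mem_map_equiv]
  simp [mul_assoc]

private lemma SN.cj_cj (a b : G) (H : Subgroup G) : SN.cj a (SN.cj b H) = SN.cj (a * b) H := by
  ext x
  simp only [SN.mem_cj]
  constructor <;> intro hx <;> simpa [mul_inv_rev, mul_assoc] using hx

private lemma SN.cj_mono {a : G} {H K : Subgroup G} (h : H ≤ K) : SN.cj a H ≤ SN.cj a K :=
  Subgroup.map_mono h

private lemma SN.cj_one (H : Subgroup G) : SN.cj 1 H = H := by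
  ext x; simp [SN.mem_cj]

private lemma SN.cj_nilpotent {a : G} {H : Subgroup G} (h : Group.IsNilpotent H) :
    Group.IsNilpotent (SN.cj a H) := by
  haveI := h
  exact (Group.isNilpotent_congr
    (Subgroup.equivMapOfInjective H _ (MulAut.conj a).injective)).mp inferInstance

private lemma SN.cj_card (a : G) (H : Subgroup G) : Nat.card (SN.cj a H) = Nat.card H :=
  (Nat.card_congr (Subgroup.equivMapOfInjective H _ (MulAut.conj a).injective).toEquiv).symm

private lemma SN.cj_of_normal {a : G} {H : Subgroup G} (h : H.Normal) : SN.cj a H = H := by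
  ext x
  rw [SN.mem_cj]
  constructor
  · intro hx
    have := h.conj_mem _ hx a
    group at this
    simpa using this
  · intro hx
    have := h.conj_mem _ hx a⁻¹
    group at this
    simpa using this

private lemma SN.cj_eq_self_iff {a : G} {H : Subgroup G} :
    SN.cj a H = H ↔ a ∈ Subgroup.normalizer (H : Set G) := by
  rw [Subgroup.mem_normalizer_iff]
  constructor
  · intro hEq x
    constructor
    · intro hx
      rw [← hEq, SN.mem_cj]
      simpa [mul_assoc] using hx
    · intro hx
      rw [← hEq, SN.mem_cj] at hx
      simpa [mul_assoc] using hx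
  · intro h
    ext x
    rw [SN.mem_cj]
    constructor
    · intro hx
      simpa [mul_assoc] using (h (a⁻¹ * x * a)).mp hx
    · intro hx
      refine (h (a⁻¹ * x * a)).mpr ?_
      simpa [mul_assoc] using hx

private lemma SN.exists_mem_normalizer_of_lt {D V : Subgroup G} (hV : Group.IsNilpotent V)
    (hle : D ≤ V) (hne : D ≠ V) : ∃ x : G, x ∈ V ∧ x ∉ D ∧ x ∈ Subgroup.normalizer (D : Set G) := by
  haveI := hV
  have hcond := normalizerCondition_of_isNilpotent (G := V)
  have hDV : D.subgroupOf V < ⊤ := by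
    rw [lt_top_iff_ne_top]
    intro hTop
    exact hne (le_antisymm hle (Subgroup.subgroupOf_eq_top.mp hTop))
  obtain ⟨x, hxn, hxD⟩ := SetLike.exists_of_lt (hcond _ hDV)
  refine ⟨(x : G), x.2, by simpa [Subgroup.mem_subgroupOf] using hxD, ?_⟩
  rw [Subgroup.mem_normalizer_iff]
  intro hh
  constructor
  · intro hhD
    have hhV : hh ∈ V := hle hhD
    have := (Subgroup.mem_normalizer_iff.mp hxn ⟨hh, hhV⟩).mp
      (Subgroup.mem_subgroupOf.mpr hhD)
    simpa [Subgroup.mem_subgroupOf] using this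
  · intro hconj
    have hconjV : (x : G) * hh * (x : G)⁻¹ ∈ V := hle hconj
    have hhV : hh ∈ V := by
      have := V.mul_mem (V.mul_mem (V.inv_mem x.2) hconjV) x.2
      simpa [mul_assoc] using this
    have := (Subgroup.mem_normalizer_iff.mp hxn ⟨hh, hhV⟩).mpr
      (by simpa [Subgroup.mem_subgroupOf] using hconj)
    simpa [Subgroup.mem_subgroupOf] using this

end AuxBasic

/-! ### The Fitting subgroup of a finite group is nilpotent -/

section AuxFitting
variable {G : Type*} [Group G]

private lemma SN.le_fitting {H : Subgroup G} (hn : H.Normal) (hnil : Group.IsNilpotent H) :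
    H ≤ FittingSubgroup G :=
  le_iSup_of_le H (le_iSup_of_le ⟨hn, hnil⟩ le_rfl)

/-- The `p`-core: the subgroup generated by all normal `p`-subgroups. -/
private def SN.pCore (G : Type*) [Group G] (p : ℕ) : Subgroup G :=
  ⨆ (P : Subgroup G) (_ : P.Normal ∧ IsPGroup p P), P

private lemma SN.le_pCore {p : ℕ} {P : Subgroup G} (hn : P.Normal) (hp : IsPGroup p P) :
    P ≤ SN.pCore G p :=
  le_iSup_of_le P (le_iSup_of_le ⟨hn, hp⟩ le_rfl)

private lemma SN.pCore_normal (p : ℕ) : (SN.pCore G p).Normal :=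
  Subgroup.normal_iSup_of_normal _ fun _ =>
    Subgroup.normal_iSup_of_normal _ fun hH => hH.1

private lemma SN.pCore_le_sylow [Finite G] {p : ℕ} [Fact p.Prime] (S : Sylow p G) :
    SN.pCore G p ≤ S := by
  refine iSup_le fun P => iSup_le fun hP => ?_
  obtain ⟨hPn, hPp⟩ := hP
  obtain ⟨Q, hPQ⟩ := hPp.exists_le_sylow
  obtain ⟨g, hg⟩ := MulAction.exists_smul_eq G Q S
  have hle : P ≤ ((g • Q : Sylow p G) : Subgroup G) := by
    rw [Sylow.coe_subgroup_smul]
    intro x hx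
    rw [Subgroup.mem_pointwise_smul_iff_inv_smul_mem]
    have : g⁻¹ * x * g ∈ P := by
      have := hPn.conj_mem x hx g⁻¹
      simpa using this
    simpa [MulAut.smul_def] using hPQ this
  rwa [hg] at hle

private lemma SN.pCore_pgroup [Finite G] {p : ℕ} [Fact p.Prime] :
    IsPGroup p (SN.pCore G p) := by
  have S : Sylow p G := default
  exact S.isPGroup'.to_le (SN.pCore_le_sylow S)

private lemma SN.card_dvd_of_le {H K : Subgroup G} (h : H ≤ K) [Finite G] :
    Nat.card H ∣ Nat.card K := by
  have e : Nat.card (H.subgroupOf K) = Nat.card H :=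
    Nat.card_congr (Subgroup.subgroupOfEquivOfLe h).toEquiv
  rw [← e]
  exact Subgroup.card_subgroup_dvd_card (H.subgroupOf K)

private lemma SN.normal_nilpotent_le_iSup_pCore [Finite G] {H : Subgroup G} (hn : H.Normal)
    (hnil : Group.IsNilpotent H) :
    H ≤ ⨆ p ∈ (Nat.card G).primeFactors, SN.pCore G p := by
  classical
  haveI := hnil
  have hSyl : ∀ (p : ℕ) (_ : Fact p.Prime) (P : Sylow p H), (P : Subgroup H).Normal :=
    ((isNilpotent_of_finite_tfae (G := H)).out 0 3).mp hnil
  set phs := (Nat.card H).primeFactors with hphs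
  have hfact : ∀ p ∈ phs, Fact p.Prime := fun p hp =>
    ⟨Nat.prime_of_mem_primeFactors hp⟩
  set EH : Subgroup G := ⨆ p ∈ phs, ⨆ P : Sylow p H, (P : Subgroup H).map H.subtype with hEH
  have hEH_le : EH ≤ H := by
    refine iSup_le fun p => iSup_le fun hp => iSup_le fun P => Subgroup.map_subtype_le _
  have hcard : Nat.card H ∣ Nat.card EH := by
    have hEH0 : Nat.card EH ≠ 0 := Nat.card_pos.ne'
    have hH0 : Nat.card H ≠ 0 := Nat.card_pos.ne'
    rw [← Nat.factorization_le_iff_dvd hH0 hEH0]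
    intro p
    by_cases hp : p ∈ phs
    · haveI := hfact p hp
      set P : Sylow p H := default
      have h1 : Nat.card ((P : Subgroup H).map H.subtype)
          = p ^ (Nat.card H).factorization p := by
        rw [Nat.card_congr
          (Subgroup.equivMapOfInjective _ _ (Subgroup.subtype_injective H)).toEquiv.symm]
        exact Sylow.card_eq_multiplicity P
      have h2 : (P : Subgroup H).map H.subtype ≤ EH :=
        le_iSup_of_le p (le_iSup_of_le hp (le_iSup_of_le P le_rfl))
      have h3 : p ^ (Nat.card H).factorization p ∣ Nat.card EH :=
        h1 ▸ SN.card_dvd_of_le h2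
      exact (Nat.Prime.pow_dvd_iff_le_factorization (hfact p hp).out hEH0).mp h3
    · have : (Nat.card H).factorization p = 0 := by
        rw [← Finsupp.notMem_support_iff, Nat.support_factorization]
        exact hp
      simp [this]
  have hHE : H = EH := by
    have h1 : Nat.card H ≤ Nat.card EH := Nat.le_of_dvd Nat.card_pos hcard
    exact (Subgroup.eq_of_le_of_card_ge hEH_le h1).symm
  rw [hHE]
  refine iSup_le fun p => iSup_le fun hp => iSup_le fun P => ?_
  haveI := hfact p hp
  have hchar : (P : Subgroup H).Characteristic :=
    Sylow.characteristic_of_normal P (hSyl p (hfact p hp) P)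
  haveI := hchar
  haveI := hn
  have hnorm : ((P : Subgroup H).map H.subtype).Normal := inferInstance
  have hpg : IsPGroup p ((P : Subgroup H).map H.subtype) := P.isPGroup'.map _
  have hmem : p ∈ (Nat.card G).primeFactors := by
    rcases Nat.mem_primeFactors.mp hp with ⟨hpp, hpd, -⟩
    exact Nat.mem_primeFactors.mpr
      ⟨hpp, hpd.trans (Subgroup.card_subgroup_dvd_card H), Nat.card_pos.ne'⟩
  exact le_iSup_of_le p (le_iSup_of_le hmem (SN.le_pCore hnorm hpg))

private lemma SN.fitting_nilpotent [Finite G] : Group.IsNilpotent (FittingSubgroup G) := by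
  classical
  set ps := (Nat.card G).primeFactors with hps
  have hfact : ∀ p : ps, Fact (Nat.Prime p.1) := fun p =>
    ⟨Nat.prime_of_mem_primeFactors p.2⟩
  set Hfam : ps → Subgroup G := fun p => SN.pCore G p.1 with hHfam
  have hcomm : Pairwise fun i j : ps => ∀ x y : G, x ∈ Hfam i → y ∈ Hfam j → Commute x y := by
    intro i j hij
    haveI := hfact i; haveI := hfact j
    have hne : (i : ℕ) ≠ (j : ℕ) := fun hc => hij (Subtype.ext hc)
    exact Subgroup.commute_of_normal_of_disjoint _ _ (SN.pCore_normal _) (SN.pCore_normal _)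
      (IsPGroup.disjoint_of_ne i.1 j.1 hne _ _ SN.pCore_pgroup SN.pCore_pgroup)
  haveI : ∀ p : ps, Group.IsNilpotent (Hfam p) := fun p => by
    haveI := hfact p
    exact (SN.pCore_pgroup (G := G) (p := p.1)).isNilpotent
  let φ := Subgroup.noncommPiCoprod hcomm
  have hrange : φ.range = ⨆ p : ps, Hfam p := Subgroup.noncommPiCoprod_range
  have hnilrange : Group.IsNilpotent φ.range :=
    nilpotent_of_surjective φ.rangeRestrict φ.rangeRestrict_surjective
  have hEq : FittingSubgroup G = ⨆ p : ps, Hfam p := by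
    apply le_antisymm
    · refine iSup_le fun H => iSup_le fun hH => ?_
      refine (SN.normal_nilpotent_le_iSup_pCore hH.1 hH.2).trans ?_
      rw [iSup_subtype]
    · refine iSup_le fun p => ?_
      haveI := hfact p
      exact SN.le_fitting (SN.pCore_normal _) SN.pCore_pgroup.isNilpotent
  rw [hEq, ← hrange]
  exact hnilrange

end AuxFitting

/-! ### The main counting argument -/

section AuxMain
variable {G : Type*} [Group G] [Finite G]

/-- Predicate: maximal nilpotent subgroup. -/
private def SN.MaxN (W : Subgroup G) : Prop :=
  Group.IsNilpotent W ∧ ∀ U : Subgroup G, Group.IsNilpotent U → W ≤ U → U = W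

private lemma SN.cover (x : G) : ∃ V : Subgroup G, SN.MaxN V ∧ x ∈ V := by
  have hx : Group.IsNilpotent (Subgroup.zpowers x) := by
    letI : CommGroup (Subgroup.zpowers x) := IsCyclic.commGroup
    exact CommGroup.isNilpotent (G := Subgroup.zpowers x)
  obtain ⟨M, hle, h1, h2⟩ := SN.exists_maxNilp hx
  exact ⟨M, ⟨h1, h2⟩, hle (Subgroup.mem_zpowers x)⟩

private lemma SN.maxN_cj {a : G} {V : Subgroup G} (hV : SN.MaxN V) : SN.MaxN (SN.cj a V) := by
  refine ⟨SN.cj_nilpotent hV.1, fun U hU hle => ?_⟩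
  have h2 : V ≤ SN.cj a⁻¹ U := by
    have := SN.cj_mono (a := a⁻¹) hle
    rwa [SN.cj_cj, inv_mul_cancel, SN.cj_one] at this
  have h3 := hV.2 (SN.cj a⁻¹ U) (SN.cj_nilpotent hU) h2
  have h4 : SN.cj a (SN.cj a⁻¹ U) = SN.cj a V := by rw [h3]
  rwa [SN.cj_cj, mul_inv_cancel, SN.cj_one] at h4

private lemma SN.no_nonnormal_max (h : SemiNilpotent G) {W : Subgroup G} (hW : SN.MaxN W)
    (hFW : FittingSubgroup G ≤ W) (hWn : ¬W.Normal) : False := by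
  classical
  set F : Subgroup G := FittingSubgroup G with hFdef
  have hFnormal : F.Normal := FittingSubgroup_normal G
  have hFneW : F ≠ W := fun hE => hWn (hE ▸ hFnormal)
  -- no maximal nilpotent subgroup is normal
  have hnonorm : ∀ V : Subgroup G, SN.MaxN V → ¬V.Normal := by
    intro V hV hVn
    have hVF : V ≤ F := SN.le_fitting hVn hV.1
    have hWV := hV.2 W hW.1 (hVF.trans hFW)
    exact hWn (hWV ▸ hVn)
  -- every maximal nilpotent subgroup is self-normalizing
  have hselfnorm : ∀ V : Subgroup G, SN.MaxN V → Subgroup.normalizer (V : Set G) = V := by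
    intro V hV
    exact hV.2 _ (h V hV.1 (hnonorm V hV)) Subgroup.le_normalizer
  -- distinct maximal nilpotent subgroups intersect inside F
  have hinter : ∀ V1 V2 : Subgroup G, SN.MaxN V1 → SN.MaxN V2 → V1 ≠ V2 → V1 ⊓ V2 ≤ F := by
    by_contra hbad
    push_neg at hbad
    obtain ⟨A1, A2, hA1, hA2, hAne, hAnle⟩ := hbad
    set B : Set (Subgroup G) :=
      {D | ¬D ≤ F ∧ ∃ V1 V2 : Subgroup G, SN.MaxN V1 ∧ SN.MaxN V2 ∧ V1 ≠ V2 ∧ D = V1 ⊓ V2}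
      with hBdef
    obtain ⟨D, hDmem, hDmax⟩ := Set.Finite.exists_maximalFor id B (Set.toFinite _)
      ⟨A1 ⊓ A2, hAnle, A1, A2, hA1, hA2, hAne, rfl⟩
    obtain ⟨hDF, V1, V2, hV1, hV2, hne, hD⟩ := hDmem
    have hDle1 : D ≤ V1 := hD ▸ inf_le_left
    have hDle2 : D ≤ V2 := hD ▸ inf_le_right
    have hDnil : Group.IsNilpotent D := SN.nilpotent_of_le hV1.1 hDle1
    have hDnn : ¬D.Normal := fun hnrm => hDF (SN.le_fitting hnrm hDnil)
    obtain ⟨W3, hNW3, hW3a, hW3b⟩ := SN.exists_maxNilp (h D hDnil hDnn)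
    have hW3 : SN.MaxN W3 := ⟨hW3a, hW3b⟩
    have hDW3 : D ≤ W3 := Subgroup.le_normalizer.trans hNW3
    have key : ∀ V : Subgroup G, SN.MaxN V → D ≤ V → D ≠ V → W3 = V := by
      intro V hV hDV hDneV
      obtain ⟨x, hxV, hxD, hxN⟩ := SN.exists_mem_normalizer_of_lt hV.1 hDV hDneV
      by_contra hne'
      have hEmem : (W3 ⊓ V) ∈ B :=
        ⟨fun hle => hDF ((le_inf hDW3 hDV).trans hle), W3, V, hW3, hV, hne', rfl⟩
      have hDE := hDmax hEmem (le_inf hDW3 hDV)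
      have hxE : x ∈ W3 ⊓ V := ⟨hNW3 hxN, hxV⟩
      have hDE' : D = W3 ⊓ V := le_antisymm (le_inf hDW3 hDV) hDE
      rw [hDE'] at hxD
      exact hxD hxE
    have hne1 : D ≠ V1 := by
      intro hE
      apply hne
      have h12 : V1 ≤ V2 := by
        rw [hE] at hD
        exact inf_eq_left.mp hD.symm
      exact (hV1.2 V2 hV2.1 h12).symm
    have hne2 : D ≠ V2 := by
      intro hE
      apply hne
      have h21 : V2 ≤ V1 := by
        rw [hE] at hD
        exact inf_eq_right.mp hD.symm
      exact hV2.2 V1 hV1.1 h21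
    exact hne ((key V1 hV1 hDle1 hne1).symm.trans (key V2 hV2 hDle2 hne2))
  -- the conjugation-and-coset injection machine, for any maximal nilpotent V
  have hmain : ∀ V : Subgroup G, SN.MaxN V →
      ∃ Ψ : (G ⧸ V) × ((V : Set G) \ (F : Set G) : Set G) → G,
        Function.Injective Ψ ∧
        (∀ a, Ψ a ∈ SN.cj (a.1.out) V ∧ Ψ a ∉ F) ∧
        (∀ (c : G ⧸ V) (x : G), x ∈ SN.cj (c.out) V → x ∉ F →
          ∃ a, a.1 = c ∧ Ψ a = x) := by
    intro V hV
    refine ⟨fun a => a.1.out * a.2.1 * a.1.out⁻¹, ?_, ?_, ?_⟩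
    · rintro ⟨c, y, hy⟩ ⟨d, z, hz⟩ hEq
      simp only at hEq
      have hyF : (c.out * y * c.out⁻¹) ∉ (F : Set G) := fun hmem =>
        hy.2 (by simpa [mul_assoc] using hFnormal.conj_mem _ hmem c.out⁻¹)
      have hmem1 : (c.out * y * c.out⁻¹) ∈ SN.cj c.out V := by
        rw [SN.mem_cj]
        simpa [mul_assoc] using hy.1
      have hmem2 : (c.out * y * c.out⁻¹) ∈ SN.cj d.out V := by
        rw [hEq, SN.mem_cj]
        simpa [mul_assoc] using hz.1
      have hcd : SN.cj c.out V = SN.cj d.out V := by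
        by_contra hne
        have := hinter _ _ (SN.maxN_cj hV) (SN.maxN_cj hV) hne ⟨hmem1, hmem2⟩
        exact hyF this
      have hcd' : c = d := by
        have h1 : SN.cj (c.out⁻¹ * d.out) V = V := by
          have := congrArg (SN.cj c.out⁻¹) hcd
          rw [SN.cj_cj, SN.cj_cj, inv_mul_cancel, SN.cj_one] at this
          exact this.symm
        have h2 : c.out⁻¹ * d.out ∈ Subgroup.normalizer (V : Set G) := SN.cj_eq_self_iff.mp h1
        rw [hselfnorm V hV] at h2
        have h3 : (c.out : G ⧸ V) = (d.out : G ⧸ V) := QuotientGroup.eq.mpr h2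
        rwa [QuotientGroup.out_eq', QuotientGroup.out_eq'] at h3
      subst hcd'
      have hyz : y = z := by
        have := hEq
        exact mul_left_cancel (mul_right_cancel this)
      exact Prod.ext rfl (Subtype.ext hyz)
    · rintro ⟨c, y, hy⟩
      constructor
      · show c.out * y * c.out⁻¹ ∈ SN.cj c.out V
        rw [SN.mem_cj]
        simpa [mul_assoc] using hy.1
      · show c.out * y * c.out⁻¹ ∉ F
        intro hmem
        exact hy.2 (by simpa [mul_assoc] using hFnormal.conj_mem _ hmem c.out⁻¹)
    · intro c x hx hxF
      refine ⟨⟨c, ⟨c.out⁻¹ * x * c.out, SN.mem_cj.mp hx, fun hmem =>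
        hxF (by simpa [mul_assoc] using hFnormal.conj_mem _ hmem c.out)⟩⟩, rfl, by
          show c.out * (c.out⁻¹ * x * c.out) * c.out⁻¹ = x
          group⟩
  -- cardinal bookkeeping
  have hncard : ∀ V : Subgroup G, (V : Set G).ncard = Nat.card V := by
    intro V
    rw [← Nat.card_coe_set_eq]
    rfl
  set n := Nat.card G with hn
  set f := Nat.card F with hf
  have hfpos : 0 < f := Nat.card_pos
  have hΩ : ((Set.univ : Set G) \ (F : Set G)).ncard = n - f := by
    rw [Set.ncard_diff (Set.subset_univ _), Set.ncard_univ, hncard]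
  -- source cardinality for a maximal nilpotent subgroup
  have hsource : ∀ V : Subgroup G,
      Nat.card ((G ⧸ V) × ((V : Set G) \ (F : Set G) : Set G))
        = Nat.card (G ⧸ V) * ((V : Set G) \ (F : Set G)).ncard := by
    intro V
    rw [Nat.card_prod, Nat.card_coe_set_eq]
  set q := Nat.card (G ⧸ W) with hq
  set w := Nat.card W with hw
  have hqw : n = q * w := Subgroup.card_eq_card_quotient_mul_card_subgroup W
  have hfw_le : f ≤ w := Subgroup.card_le_of_le hFW
  have hfn_le : f ≤ n := Subgroup.card_le_card_group F
  set dW := ((W : Set G) \ (F : Set G)).ncard with hdW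
  have hdWe : f + dW = w := by
    have : dW = w - f := by
      rw [hdW, Set.ncard_diff (by exact_mod_cast hFW : (F : Set G) ⊆ (W : Set G)),
        hncard, hncard]
    omega
  have hsplit : n = q * f + q * dW := by
    rw [hqw, ← hdWe, Nat.mul_add]
  by_cases hcase : ∀ V : Subgroup G, SN.MaxN V → ∃ g : G, V = SN.cj g W
  · -- all maximal nilpotent subgroups are conjugate to W
    obtain ⟨Ψ, hinj, hprop, hsurj⟩ := hmain W hW
    set Ω := ((Set.univ : Set G) \ (F : Set G)) with hΩdef
    have hΨ' : ∃ Ψ' : ((G ⧸ W) × ((W : Set G) \ (F : Set G) : Set G)) → Ω,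
        Function.Bijective Ψ' := by
      refine ⟨fun a => ⟨Ψ a, ⟨trivial, (hprop a).2⟩⟩, ?_, ?_⟩
      · intro a b hab
        exact hinj (congrArg Subtype.val hab)
      · rintro ⟨x, -, hxF⟩
        obtain ⟨V', hV', hxV'⟩ := SN.cover x
        obtain ⟨g, hg⟩ := hcase V' hV'
        obtain ⟨u, hu⟩ := QuotientGroup.mk_out_eq_mul W g
        have hcjeq : SN.cj ((g : G ⧸ W)).out W = SN.cj g W := by
          rw [hu, ← SN.cj_cj, SN.cj_eq_self_iff.mpr (Subgroup.le_normalizer u.2)]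
        have hxmem : x ∈ SN.cj ((g : G ⧸ W)).out W := by
          rw [hcjeq, ← hg]; exact hxV'
        obtain ⟨a, hac, hax⟩ := hsurj (g : G ⧸ W) x hxmem hxF
        exact ⟨a, Subtype.ext hax⟩
    obtain ⟨Ψ', hbij⟩ := hΨ'
    have hcards : q * dW = n - f := by
      have := Nat.card_eq_of_bijective Ψ' hbij
      rw [hsource W] at this
      rw [← hdW, ← hq] at this
      rw [this]
      rw [Nat.card_coe_set_eq, hΩ]
    have hqf : q * f = f := by omega
    have hq1 : q = 1 := by
      have : q * f = 1 * f := by rw [hqf, one_mul]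
      exact Nat.eq_of_mul_eq_mul_right hfpos this
    have hWtop : W = ⊤ := by
      rw [← Subgroup.index_eq_one, Subgroup.index_eq_card]
      exact hq1
    rw [hWtop] at hWn
    exact hWn inferInstance
  · -- there is a maximal nilpotent subgroup not conjugate to W
    push_neg at hcase
    obtain ⟨L, hL, hLW⟩ := hcase
    have hLnF : ¬L ≤ F := by
      intro hle
      have := hL.2 F SN.fitting_nilpotent hle
      exact hnonorm L hL (this ▸ hFnormal)
    set r := Nat.card (G ⧸ L) with hr
    set l := Nat.card L with hl
    set m := Nat.card (L ⊓ F : Subgroup G) with hm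
    have hrl : n = r * l := Subgroup.card_eq_card_quotient_mul_card_subgroup L
    have hml_dvd : m ∣ l := SN.card_dvd_of_le inf_le_left
    have hml_ne : m ≠ l := by
      intro hEq
      apply hLnF
      have : L ⊓ F = L :=
        Subgroup.eq_of_le_of_card_ge inf_le_left hEq.ge
      exact inf_eq_left.mp this
    have hmpos : 0 < m := Nat.card_pos
    have h2m : 2 * m ≤ l := by
      obtain ⟨k, hk⟩ := hml_dvd
      have hk2 : 2 ≤ k := by
        have hlpos : 0 < l := Nat.card_pos
        rcases Nat.lt_or_ge k 2 with hlt | hge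
        · interval_cases k
          · rw [Nat.mul_zero] at hk; omega
          · rw [Nat.mul_one] at hk; exact absurd hk.symm hml_ne
        · exact hge
      calc 2 * m = m * 2 := by ring
        _ ≤ m * k := Nat.mul_le_mul_left m hk2
        _ = l := hk.symm
    have h2f : 2 * f ≤ w := by
      have hfw_dvd : f ∣ w := SN.card_dvd_of_le hFW
      have hfw_ne : f ≠ w := by
        intro hEq
        exact hFneW (Subgroup.eq_of_le_of_card_ge hFW hEq.ge)
      obtain ⟨k, hk⟩ := hfw_dvd
      have hk2 : 2 ≤ k := by
        have hwpos : 0 < w := Nat.card_pos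
        rcases Nat.lt_or_ge k 2 with hlt | hge
        · interval_cases k
          · rw [Nat.mul_zero] at hk; omega
          · rw [Nat.mul_one] at hk; exact absurd hk.symm hfw_ne
        · exact hge
      calc 2 * f = f * 2 := by ring
        _ ≤ f * k := Nat.mul_le_mul_left f hk2
        _ = w := hk.symm
    set dL := ((L : Set G) \ (F : Set G)).ncard with hdL
    have hdLe : m + dL = l := by
      have h1 : ((L : Set G) \ (F : Set G)) = (L : Set G) \ ((L : Set G) ∩ (F : Set G)) := by
        rw [Set.diff_self_inter]
      have h2 : ((L : Set G) ∩ (F : Set G)).ncard = m := by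
        rw [← Subgroup.coe_inf, hncard]
      have h3 : dL = l - m := by
        rw [hdL, h1, Set.ncard_diff Set.inter_subset_left, h2, hncard]
      have hml_le : m ≤ l := Subgroup.card_le_of_le inf_le_left
      omega
    have hsplitL : n = r * m + r * dL := by
      rw [hrl, ← hdLe, Nat.mul_add]
    -- the combined injection
    obtain ⟨ΨW, hinjW, hpropW, -⟩ := hmain W hW
    obtain ⟨ΨL, hinjL, hpropL, -⟩ := hmain L hL
    have hcross : ∀ a b, ΨW a ≠ ΨL b := by
      intro a b hEq
      have hx1 := (hpropW a).1
      have hx2 : ΨW a ∈ SN.cj (b.1.out) L := hEq ▸ (hpropL b).1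
      have hdiff : SN.cj (a.1.out) W ≠ SN.cj (b.1.out) L := by
        intro hsame
        apply hLW (b.1.out⁻¹ * a.1.out)
        have := congrArg (SN.cj (b.1.out)⁻¹) hsame
        rw [SN.cj_cj, SN.cj_cj, inv_mul_cancel, SN.cj_one] at this
        exact this.symm
      have := hinter _ _ (SN.maxN_cj hW) (SN.maxN_cj hL) hdiff ⟨hx1, hx2⟩
      exact (hpropW a).2 this
    have hcomb : ∃ Θ : ((G ⧸ W) × ((W : Set G) \ (F : Set G) : Set G)) ⊕
        ((G ⧸ L) × ((L : Set G) \ (F : Set G) : Set G)) →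
        ((Set.univ : Set G) \ (F : Set G) : Set G), Function.Injective Θ := by
      refine ⟨Sum.elim (fun a => ⟨ΨW a, ⟨trivial, (hpropW a).2⟩⟩)
        (fun b => ⟨ΨL b, ⟨trivial, (hpropL b).2⟩⟩), ?_⟩
      rintro (a | a) (b | b) hab <;> simp only [Sum.elim_inl, Sum.elim_inr] at hab
      · rw [hinjW (congrArg Subtype.val hab)]
      · exact absurd (congrArg Subtype.val hab) (hcross a b)
      · exact absurd (congrArg Subtype.val hab).symm (hcross b a)
      · rw [hinjL (congrArg Subtype.val hab)]
    obtain ⟨Θ, hΘ⟩ := hcomb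
    have hbound : q * dW + r * dL ≤ n - f := by
      have h1 := Nat.card_le_card_of_injective Θ hΘ
      rw [Nat.card_sum, hsource W, hsource L] at h1
      rw [← hdW, ← hdL, ← hq, ← hr] at h1
      rwa [Nat.card_coe_set_eq, hΩ] at h1
    have hCf : 2 * (q * f) ≤ n := by
      calc 2 * (q * f) = q * (2 * f) := by ring
        _ ≤ q * w := Nat.mul_le_mul_left q h2f
        _ = n := hqw.symm
    have hCm : 2 * (r * m) ≤ n := by
      calc 2 * (r * m) = r * (2 * m) := by ring
        _ ≤ r * l := Nat.mul_le_mul_left r h2m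
        _ = n := hrl.symm
    omega

end AuxMain

theorem fitting_maximal_nilpotent_of_semiNilpotent
    (G : Type*) [Group G] [Finite G] (h : SemiNilpotent G) :
    IsMaximalNilpotent (FittingSubgroup G) := by
  constructor
  · exact SN.fitting_nilpotent
  · intro V hV hFV
    obtain ⟨M, hVM, h1, h2⟩ := SN.exists_maxNilp hV
    have hM : SN.MaxN M := ⟨h1, h2⟩
    by_cases hMn : M.Normal
    · exact le_antisymm (hVM.trans (SN.le_fitting hMn h1)) hFV
    · exact (SN.no_nonnormal_max h hM (hFV.trans hVM) hMn).elim
end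

section
/- Let G be a finite group, p a prime, H a p-subgroup of G, and N a soluble normal subgroup of G such that either N ≤ H or gcd(|N|, |H|) = 1. If N_G(H)/C_G(H) is a p-group, then N_{G/N}(HN/N)/C_{G/N}(HN/N) is a p-group. -/
open Subgroup

section Aux

open Pointwise

variable {G : Type*} [Group G]

private lemma conj_smul_eq_iff {K : Subgroup G} {x : G} :
    MulAut.conj x • K = K ↔ x ∈ (Subgroup.normalizer (K : Set G)) := by
  have key : ∀ g : G, (g ∈ MulAut.conj x • K ↔ x⁻¹ * g * x ∈ K) := fun g => by
    rw [Subgroup.mem_pointwise_smul_iff_inv_smul_mem]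
    simp [MulAut.smul_def]
  rw [Subgroup.mem_normalizer_iff'', SetLike.ext_iff]
  exact ⟨fun h g => (h g).symm.trans (key g), fun h g => (key g).trans (h g).symm⟩

private lemma normalizer_le_normalizer_sup (H N : Subgroup G) [N.Normal] :
    (Subgroup.normalizer (H : Set G)) ≤ (Subgroup.normalizer ((H ⊔ N : Subgroup G) : Set G)) := by
  intro x hx
  rw [← conj_smul_eq_iff, Subgroup.smul_sup, conj_smul_eq_iff.mpr hx, Subgroup.Normal.conj_smul_eq_self]

private lemma normalizer_sup_le {p : ℕ} [Finite G] (hp : p.Prime)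
    (H N : Subgroup G) [N.Normal] (hH : IsPGroup p H)
    (hcond : N ≤ H ∨ Nat.Coprime (Nat.card N) (Nat.card H)) :
    (Subgroup.normalizer ((H ⊔ N : Subgroup G) : Set G)) ≤ (Subgroup.normalizer (H : Set G)) ⊔ N := by
  rcases hcond with hle | hco
  · rw [sup_of_le_left hle]; exact le_sup_left
  by_cases hbot : H = ⊥
  · subst hbot
    have h1 : (Subgroup.normalizer ((⊥ : Subgroup G) : Set G)) = ⊤ := Subgroup.normalizer_eq_top_iff.mpr inferInstance
    rw [h1]
    exact le_trans le_top le_sup_left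
  haveI : Fact p.Prime := ⟨hp⟩
  -- p does not divide the order of N
  have hpH : p ∣ Nat.card H := by
    obtain ⟨n, hn⟩ := IsPGroup.iff_card.mp hH
    rcases Nat.eq_zero_or_pos n with rfl | hnpos
    · exact absurd (Subgroup.card_eq_one.mp (by simpa using hn)) hbot
    · exact hn ▸ dvd_pow_self p hnpos.ne'
  have hpN : ¬ p ∣ Nat.card N := fun hdvd =>
    Nat.Prime.one_lt hp |>.ne' (Nat.eq_one_of_dvd_one (hco ▸ Nat.dvd_gcd hdvd hpH) ▸ rfl)
  -- disjointness
  have hdisj : Disjoint N H := by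
    rw [disjoint_iff, ← Subgroup.card_eq_one]
    exact Nat.eq_one_of_dvd_one (hco ▸ Nat.dvd_gcd
      (Subgroup.card_dvd_of_le inf_le_left) (Subgroup.card_dvd_of_le inf_le_right))
  set K := H ⊔ N with hK
  have hHK : H ≤ K := le_sup_left
  have hNK : N ≤ K := le_sup_right
  set M := (Subgroup.normalizer (K : Set G)) with hM
  have hKM : K ≤ M := Subgroup.le_normalizer
  have hHnormM : (Subgroup.normalizer (H : Set G)) ≤ M := normalizer_le_normalizer_sup H N
  -- cardinalities
  have hcardH : Nat.card ↥(H.subgroupOf K) = Nat.card ↥H :=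
    Nat.card_congr (Subgroup.subgroupOfEquivOfLe hHK).toEquiv
  have hcardN : Nat.card ↥(N.subgroupOf K) = Nat.card ↥N :=
    Nat.card_congr (Subgroup.subgroupOfEquivOfLe hNK).toEquiv
  have hidxN : (N.subgroupOf K).index = Nat.card ↥H := by
    rw [Subgroup.index_eq_card,
      Nat.card_congr (QuotientGroup.quotientInfEquivProdNormalQuotient H N).toEquiv.symm]
    have : N.subgroupOf H = ⊥ := Subgroup.subgroupOf_eq_bot.mpr (hdisj.mono_right le_rfl)
    rw [this, Nat.card_congr (QuotientGroup.quotientBot (G := ↥H)).toEquiv]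
  have hcardK : Nat.card ↥K = Nat.card ↥N * Nat.card ↥H := by
    rw [← (N.subgroupOf K).card_mul_index, hcardN, hidxN]
  have hrel : (H.subgroupOf K).index = Nat.card ↥N := by
    have h1 : Nat.card ↥(H.subgroupOf K) * (H.subgroupOf K).index = Nat.card ↥K :=
      (H.subgroupOf K).card_mul_index
    rw [hcardH, hcardK, mul_comm (Nat.card ↥N) (Nat.card ↥H)] at h1
    have hpos : 0 < Nat.card ↥H := Nat.card_pos
    exact Nat.eq_of_mul_eq_mul_left hpos h1
  -- the Sylow subgroup
  have hP0 : IsPGroup p ((H.subgroupOf M).subgroupOf (K.subgroupOf M)) :=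
    (hH.comap_of_injective M.subtype Subtype.coe_injective).comap_of_injective
      (K.subgroupOf M).subtype Subtype.coe_injective
  have hidx : ¬ p ∣ ((H.subgroupOf M).subgroupOf (K.subgroupOf M)).index := by
    have : ((H.subgroupOf M).subgroupOf (K.subgroupOf M)).index
        = (H.subgroupOf M).relIndex (K.subgroupOf M) := rfl
    rw [this, Subgroup.relIndex_subgroupOf hKM]
    show ¬ p ∣ (H.subgroupOf K).index
    rw [hrel]
    exact hpN
  haveI : (K.subgroupOf M).Normal := Subgroup.normal_in_normalizer
  have hfrat := Sylow.normalizer_sup_eq_top (G := ↥M) (N := K.subgroupOf M)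
    (hP0.toSylow hidx)
  have hinf : H.subgroupOf M ⊓ K.subgroupOf M = H.subgroupOf M :=
    inf_of_le_left (Subgroup.comap_mono hHK)
  rw [IsPGroup.toSylow_coe, Subgroup.subgroupOf_map_subtype, hinf,
    ← Subgroup.subgroupOf_normalizer_eq (hHK.trans hKM)] at hfrat
  -- push back to G
  have hmap := congrArg (Subgroup.map M.subtype) hfrat
  rw [Subgroup.map_sup, Subgroup.subgroupOf_map_subtype, Subgroup.subgroupOf_map_subtype,
    inf_of_le_left hHnormM, inf_of_le_left hKM] at hmap
  have htop : Subgroup.map M.subtype ⊤ = M :=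
    (MonoidHom.range_eq_map M.subtype).symm.trans (Subgroup.range_subtype M)
  rw [htop, hK, ← sup_assoc, sup_of_le_left Subgroup.le_normalizer] at hmap
  exact hmap.ge

private lemma map_normalizer_eq {p : ℕ} [Finite G] (hp : p.Prime)
    (H N : Subgroup G) [N.Normal] (hH : IsPGroup p H)
    (hcond : N ≤ H ∨ Nat.Coprime (Nat.card N) (Nat.card H)) :
    (Subgroup.normalizer ((H.map (QuotientGroup.mk' N)) : Set (G ⧸ N))) = (Subgroup.normalizer (H : Set G)).map (QuotientGroup.mk' N) := by
  have hsurj : Function.Surjective (QuotientGroup.mk' N) := QuotientGroup.mk'_surjective N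
  refine le_antisymm ?_ (Subgroup.le_normalizer_map _)
  have h1 : Subgroup.comap (QuotientGroup.mk' N) (Subgroup.normalizer ((H.map (QuotientGroup.mk' N)) : Set (G ⧸ N)))
      = (Subgroup.normalizer ((H ⊔ N : Subgroup G) : Set G)) := by
    rw [Subgroup.comap_normalizer_eq_of_surjective _ hsurj, Subgroup.comap_map_eq,
      QuotientGroup.ker_mk']
  calc (Subgroup.normalizer ((H.map (QuotientGroup.mk' N)) : Set (G ⧸ N)))
      = Subgroup.map (QuotientGroup.mk' N) ((Subgroup.normalizer ((H ⊔ N : Subgroup G) : Set G))) := by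
        rw [← h1, Subgroup.map_comap_eq_self_of_surjective hsurj]
    _ ≤ Subgroup.map (QuotientGroup.mk' N) ((Subgroup.normalizer (H : Set G)) ⊔ N) :=
        Subgroup.map_mono (normalizer_sup_le hp H N hH hcond)
    _ = (Subgroup.normalizer (H : Set G)).map (QuotientGroup.mk' N) := by
        rw [Subgroup.map_sup, QuotientGroup.map_mk'_self, sup_bot_eq]

end Aux

theorem frobenius_condition_quotient
    (G : Type*) [Group G] [Finite G] (p : ℕ) (hp : p.Prime)
    (H N : Subgroup G) [N.Normal] (hH : IsPGroup p H) (hNsol : IsSolvable N)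
    (hcond : N ≤ H ∨ Nat.Coprime (Nat.card N) (Nat.card H))
    (hfrob : FrobeniusNC p H) :
    FrobeniusNC p (H.map (QuotientGroup.mk' N)) := by
  classical
  set pi := QuotientGroup.mk' N with hpi
  set Q := H.map pi with hQ
  have hnorm : (Subgroup.normalizer (Q : Set (G ⧸ N))) = (Subgroup.normalizer (H : Set G)).map pi := map_normalizer_eq hp H N hH hcond
  -- the homomorphism from N_G(H) to N_{G/N}(Q)
  have hmem : ∀ x : ↥(Subgroup.normalizer (H : Set G)), pi x ∈ (Subgroup.normalizer (Q : Set (G ⧸ N))) := fun x => by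
    rw [hnorm]; exact ⟨x, x.2, rfl⟩
  let f : ↥(Subgroup.normalizer (H : Set G)) →* ↥(Subgroup.normalizer (Q : Set (G ⧸ N))) :=
    (pi.domRestrict (Subgroup.normalizer (H : Set G))).codRestrict (Subgroup.normalizer (Q : Set (G ⧸ N))) hmem
  let C' := (Subgroup.centralizer (Q : Set (G ⧸ N))).subgroupOf (Subgroup.normalizer (Q : Set (G ⧸ N)))
  let psi : ↥(Subgroup.normalizer (H : Set G)) →* ↥(Subgroup.normalizer (Q : Set (G ⧸ N))) ⧸ C' := (QuotientGroup.mk' C').comp f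
  have hker : ∀ x : ↥(Subgroup.normalizer (H : Set G)),
      x ∈ (Subgroup.centralizer (H : Set G)).subgroupOf (Subgroup.normalizer (H : Set G)) → psi x = 1 := by
    intro x hx
    have hcent : pi (x : G) ∈ Subgroup.centralizer (Q : Set (G ⧸ N)) := by
      rw [Subgroup.mem_centralizer_iff]
      rintro _ ⟨h, hh, rfl⟩
      have : h * (x : G) = (x : G) * h := (Subgroup.mem_centralizer_iff.mp hx) h hh
      rw [← map_mul, ← map_mul, this]
    have : f x ∈ C' := hcent
    simpa [psi] using (QuotientGroup.eq_one_iff (f x)).mpr this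
  let phi : (↥(Subgroup.normalizer (H : Set G)) ⧸ (Subgroup.centralizer (H : Set G)).subgroupOf (Subgroup.normalizer (H : Set G)))
      →* ↥(Subgroup.normalizer (Q : Set (G ⧸ N))) ⧸ C' :=
    QuotientGroup.lift _ psi hker
  have hsurj : Function.Surjective phi := by
    intro q
    obtain ⟨y, rfl⟩ := QuotientGroup.mk'_surjective C' q
    have hy : (y : G ⧸ N) ∈ (Subgroup.normalizer (H : Set G)).map pi := hnorm ▸ y.2
    obtain ⟨x, hxmem, hxy⟩ := hy
    refine ⟨QuotientGroup.mk ⟨x, hxmem⟩, ?_⟩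
    have hfx : f ⟨x, hxmem⟩ = y := Subtype.ext hxy
    show psi ⟨x, hxmem⟩ = QuotientGroup.mk' C' y
    simp [psi, hfx]
  exact hfrob.of_surjective phi hsurj
end
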